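/- arXiv:2009.13728 — 5 statements merged into one kernel-verified Lean document; each statement's English description precedes it below -/
import Mathlib

section
/- Let a, b, c be real constants with 0 < a ≤ b ≤ 1 + a and b < c. Then x·F(a+1,b+1;c+1;−x)/F(a+1,b;c;−x) tends to +∞ as the real variable x tends to +∞. -/
set_option maxHeartbeats 1000000

open Complex Filter MeasureTheory Metric Set intervalIntegral

lemma aux_min_atTop {f g : ℝ → ℝ} (hf : Tendsto f atTop atTop)
    (hg : Tendsto g atTop atTop) :
    Tendsto (fun x => min (f x) (g x)) atTop atTop := by
  simp only [Filter.tendsto_atTop] at hf hg ⊢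
  intro C
  filter_upwards [hf C, hg C] with x h1 h2
  exact le_min h1 h2

lemma aux_ratio_ge {x N N₀ D P : ℝ} (hx : 0 < x) (hN0 : 0 < N₀) (hN : N₀ ≤ N)
    (hP : 0 < P) (hD : 0 < D) (hDP : D ≤ P + 2 * N) :
    min (x * N₀ / (2 * P)) (x / 4) ≤ x * N / D := by
  rcases le_total (2 * N) P with h | h
  · refine le_trans (min_le_left _ _) ?_
    calc x * N₀ / (2 * P) ≤ x * N / (2 * P) := by
          apply div_le_div_of_nonneg_right ?_ (by linarith)
          · nlinarith
      _ ≤ x * N / D := div_le_div_of_nonneg_left (by nlinarith) hD (by linarith)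
  · refine le_trans (min_le_right _ _) ?_
    have hNne : N ≠ 0 := ne_of_gt (lt_of_lt_of_le hN0 hN)
    have : x / 4 = x * N / (4 * N) := by
      rw [mul_comm x N, show (4:ℝ) * N = N * 4 by ring, mul_div_mul_left _ _ hNne]
    rw [this]
    exact div_le_div_of_nonneg_left (by nlinarith) hD (by linarith)

lemma aux_sub_integral_le {f : ℝ → ℝ} {u v : ℝ} (h0u : 0 ≤ u) (huv : u ≤ v)
    (hv1 : v ≤ 1) (hf : ∀ t ∈ Icc (0:ℝ) 1, 0 ≤ f t)
    (hI : IntervalIntegrable f volume 0 1) :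
    ∫ t in u..v, f t ≤ ∫ t in (0:ℝ)..1, f t := by
  have hsub : ∀ {p q : ℝ}, 0 ≤ p → p ≤ q → q ≤ 1 → IntervalIntegrable f volume p q := by
    intro p q hp hpq hq1
    apply hI.mono_set
    rw [uIcc_of_le hpq, uIcc_of_le zero_le_one]
    exact Icc_subset_Icc hp hq1
  have h1 : (∫ t in (0:ℝ)..1, f t) =
      (∫ t in (0:ℝ)..u, f t) + (∫ t in u..v, f t) + (∫ t in v..(1:ℝ), f t) := by
    rw [integral_add_adjacent_intervals (hsub le_rfl h0u (huv.trans hv1)) (hsub h0u huv hv1),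
      integral_add_adjacent_intervals (hsub le_rfl (h0u.trans huv) hv1) (hsub (h0u.trans huv) hv1 le_rfl)]
  have h2 : 0 ≤ ∫ t in (0:ℝ)..u, f t :=
    integral_nonneg h0u (fun t ht => hf t ⟨ht.1, ht.2.trans (huv.trans hv1)⟩)
  have h3 : 0 ≤ ∫ t in v..(1:ℝ), f t :=
    integral_nonneg hv1 (fun t ht => hf t ⟨(h0u.trans huv).trans ht.1, ht.2⟩)
  linarith

lemma aux_sqrt_atTop : Tendsto Real.sqrt atTop atTop := by
  simp only [Filter.tendsto_atTop]
  intro C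
  filter_upwards [eventually_ge_atTop (C ^ 2), eventually_ge_atTop 0] with x hx hx0
  calc C ≤ |C| := le_abs_self C
    _ = Real.sqrt (C ^ 2) := (Real.sqrt_sq_eq_abs C).symm
    _ ≤ Real.sqrt x := Real.sqrt_le_sqrt hx

lemma aux_x_div_log (K : ℝ) :
    Tendsto (fun x : ℝ => x / (K + Real.log (x / 2))) atTop atTop := by
  apply tendsto_atTop_mono' atTop (f₁ := fun x => Real.sqrt x / 3)
  · filter_upwards [eventually_ge_atTop 4, eventually_ge_atTop (2 * Real.exp (|K| + 1)),
      eventually_ge_atTop (K^2)] with x hx4 hxe hxK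
    have hx0 : (0:ℝ) < x := by linarith
    have hsx : 0 < Real.sqrt x := Real.sqrt_pos.mpr hx0
    have hloglb : |K| + 1 ≤ Real.log (x / 2) := by
      calc |K| + 1 = Real.log (Real.exp (|K| + 1)) := (Real.log_exp _).symm
        _ ≤ Real.log (x / 2) :=
          Real.log_le_log (Real.exp_pos _) (by linarith [Real.exp_pos (|K|+1)])
    have hden : 0 < K + Real.log (x / 2) := by
      have := neg_abs_le K; linarith
    have hlog : Real.log (x/2) ≤ 2 * Real.sqrt x := by
      have h2 : Real.log (x/2) = 2 * Real.log (Real.sqrt (x/2)) := by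
        rw [Real.log_sqrt (by linarith)]; ring
      have h3 : Real.log (Real.sqrt (x/2)) ≤ Real.sqrt (x/2) - 1 :=
        Real.log_le_sub_one_of_pos (Real.sqrt_pos.mpr (by linarith))
      have h4 : Real.sqrt (x/2) ≤ Real.sqrt x := Real.sqrt_le_sqrt (by linarith)
      nlinarith
    have hKsx : |K| ≤ Real.sqrt x := by
      have : Real.sqrt (K^2) ≤ Real.sqrt x := Real.sqrt_le_sqrt hxK
      rwa [Real.sqrt_sq_eq_abs] at this
    rw [div_le_div_iff₀ (by norm_num) hden]
    have hsq : Real.sqrt x * Real.sqrt x = x := Real.mul_self_sqrt hx0.le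
    have hK' : K ≤ |K| := le_abs_self K
    nlinarith
  · exact aux_sqrt_atTop.atTop_div_const (by norm_num)

lemma aux_beta_integrable {p q : ℝ} (hp : -1 < p) (hq : -1 < q) :
    IntervalIntegrable (fun t : ℝ => t ^ p * (1 - t) ^ q) volume 0 (1:ℝ) := by
  have A : IntervalIntegrable (fun t : ℝ => t ^ p * (1 - t) ^ q) volume 0 (1/2) := by
    apply (intervalIntegrable_rpow' hp).mul_continuousOn
    intro t ht
    rw [uIcc_of_le (by norm_num : (0:ℝ) ≤ 1/2)] at ht
    have h1 : (1:ℝ) - t ≠ 0 := by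
      have := ht.2; intro h; linarith
    exact ((Real.continuousAt_rpow_const _ _ (Or.inl h1)).comp
      ((continuous_const.sub continuous_id).continuousAt)).continuousWithinAt
  have B : IntervalIntegrable (fun t : ℝ => t ^ p * (1 - t) ^ q) volume (1/2) 1 := by
    have h0 : IntervalIntegrable (fun t : ℝ => t ^ q) volume 0 (1/2) :=
      intervalIntegrable_rpow' hq
    have h1 := h0.comp_sub_left 1
    norm_num at h1
    -- h1 : IntervalIntegrable (fun x => (1 - x) ^ q) volume (1/2) 1  (check)
    apply h1.symm.continuousOn_mul
    intro t ht
    rw [uIcc_of_le (by norm_num : (1:ℝ)/2 ≤ 1)] at ht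
    have h2 : t ≠ 0 := by have := ht.1; intro h; rw [h] at this; norm_num at this
    exact ((Real.continuousAt_rpow_const _ _ (Or.inl h2)).continuousWithinAt)
  exact A.trans B

lemma aux_integrable {p q a x : ℝ} (hp : -1 < p) (hq : -1 < q) (ha : 0 < a) (hx : 0 ≤ x) :
    IntervalIntegrable (fun t : ℝ => t ^ p * (1 - t) ^ q * (1 + t * x) ^ (-(a+1)))
      volume 0 (1:ℝ) := by
  apply (aux_beta_integrable hp hq).mono_fun'
    ((Measurable.aestronglyMeasurable (by fun_prop)))
  rw [Filter.EventuallyLE, ae_restrict_iff' measurableSet_uIoc]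
  apply Eventually.of_forall
  intro t ht
  rw [uIoc_of_le (by norm_num : (0:ℝ) ≤ 1)] at ht
  have ht0 : 0 < t := ht.1
  have ht1 : t ≤ 1 := ht.2
  have h1 : (1:ℝ) ≤ 1 + t * x := by nlinarith
  have h2 : (1 + t * x) ^ (-(a+1)) ≤ 1 :=
    Real.rpow_le_one_of_one_le_of_nonpos h1 (by linarith)
  have h3 : 0 ≤ (1 + t * x) ^ (-(a+1)) := Real.rpow_nonneg (by linarith) _
  have h4 : 0 ≤ t ^ p := Real.rpow_nonneg ht0.le _
  have h5 : 0 ≤ (1 - t) ^ q := Real.rpow_nonneg (by linarith) _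
  have h6 : 0 ≤ t ^ p * (1 - t) ^ q := mul_nonneg h4 h5
  simp only [Real.norm_eq_abs]
  rw [_root_.abs_of_nonneg (mul_nonneg h6 h3)]
  nlinarith

lemma aux_cont_r {a x : ℝ} (hx : 0 ≤ x) {s : Set ℝ} (hs : s ⊆ Icc 0 1) :
    ContinuousOn (fun t : ℝ => (1 + t * x) ^ (-(a+1))) s := by
  intro t ht
  have h := hs ht
  have h1 : (0:ℝ) < 1 + t * x := by nlinarith [h.1, h.2]
  have hg : ContinuousAt (fun t : ℝ => 1 + t * x) t := by fun_prop
  exact (hg.rpow_const (Or.inl h1.ne')).continuousWithinAt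

lemma aux_mono' {f : ℝ → ℝ} {A B u v : ℝ} (h : IntervalIntegrable f volume A B)
    (hu : A ≤ u) (huv : u ≤ v) (hv : v ≤ B) : IntervalIntegrable f volume u v :=
  h.mono_set (by rw [uIcc_of_le huv, uIcc_of_le ((hu.trans huv).trans hv)]; exact Icc_subset_Icc hu hv)

lemma aux_Mbound {q t : ℝ} (ht : t ∈ Icc (0:ℝ) (1/2)) :
    (1 - t) ^ q ≤ max 1 ((2:ℝ) ^ (-q)) := by
  have h12 : (1:ℝ)/2 ≤ 1 - t := by linarith [ht.2]
  have h1 : 1 - t ≤ 1 := by linarith [ht.1]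
  rcases le_or_gt 0 q with h | h
  · exact le_max_of_le_left (Real.rpow_le_one (by linarith) h1 h)
  · refine le_max_of_le_right ?_
    have h2 : (1 - t) ^ q ≤ ((1:ℝ)/2) ^ q :=
      Real.rpow_le_rpow_of_nonpos (by norm_num) h12 h.le
    have h3 : ((1:ℝ)/2) ^ q = (2:ℝ) ^ (-q) := by
      rw [one_div, Real.inv_rpow (by norm_num), ← Real.rpow_neg (by norm_num)]
    linarith
lemma aux_mbound {q t : ℝ} (ht : t ∈ Icc (0:ℝ) (1/2)) :
    min 1 ((2:ℝ) ^ (-q)) ≤ (1 - t) ^ q := by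
  have h12 : (1:ℝ)/2 ≤ 1 - t := by linarith [ht.2]
  have h1 : 1 - t ≤ 1 := by linarith [ht.1]
  have h3 : ((1:ℝ)/2) ^ q = (2:ℝ) ^ (-q) := by
    rw [one_div, Real.inv_rpow (by norm_num), ← Real.rpow_neg (by norm_num)]
  rcases le_or_gt 0 q with h | h
  · refine le_trans (min_le_right _ _) ?_
    rw [← h3]
    exact Real.rpow_le_rpow (by norm_num) h12 h
  · refine le_trans (min_le_left _ _) ?_
    have := Real.rpow_le_rpow_of_nonpos (by linarith : (0:ℝ) < 1 - t) h1 h.le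
    rwa [Real.one_rpow] at this

lemma aux_core (a b c : ℝ) (ha : 0 < a) (hab : a ≤ b) (hba : b ≤ 1 + a) (hbc : b < c) :
    Tendsto (fun x : ℝ =>
      x * (∫ t in (0:ℝ)..1, t ^ b * (1-t) ^ (c-b-1) * (1 + t*x) ^ (-(a+1))) /
        (∫ t in (0:ℝ)..1, t ^ (b-1) * (1-t) ^ (c-b-1) * (1 + t*x) ^ (-(a+1))))
      atTop atTop := by
  have hb0 : 0 < b := lt_of_lt_of_le ha hab
  have hp : (-1:ℝ) < b - 1 := by linarith
  have hp' : (-1:ℝ) < b := by linarith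
  have hq : (-1:ℝ) < c - b - 1 := by linarith
  set M : ℝ := max 1 ((2:ℝ) ^ (-(c-b-1))) with hMdef
  set m2 : ℝ := min 1 ((2:ℝ) ^ (-(c-b-1))) with hm2def
  have hM1 : (1:ℝ) ≤ M := le_max_left _ _
  have hM0 : 0 < M := by linarith
  have hm20 : 0 < m2 := lt_min one_pos (Real.rpow_pos_of_pos (by norm_num) _)
  set fN : ℝ → ℝ := fun x => ∫ t in (0:ℝ)..1, t ^ b * (1-t) ^ (c-b-1) * (1 + t*x) ^ (-(a+1)) with hfN
  set fD : ℝ → ℝ := fun x => ∫ t in (0:ℝ)..1, t ^ (b-1) * (1-t) ^ (c-b-1) * (1 + t*x) ^ (-(a+1)) with hfD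
  -- per-x common facts
  have common : ∀ x : ℝ, 4 ≤ x →
      (1/4:ℝ) * ((4:ℝ)⁻¹ ^ b * m2 * (2*x) ^ (-(a+1))) ≤ fN x ∧ fN x ≤ fD x ∧
      (fD x ≤ M * ((∫ t in (0:ℝ)..x⁻¹, t ^ (b-1) * (1 + t*x) ^ (-(a+1))) +
        (∫ t in x⁻¹..(1/2:ℝ), t ^ (b-1) * (1 + t*x) ^ (-(a+1)))) + 2 * fN x) ∧
      (∫ t in (0:ℝ)..x⁻¹, t ^ (b-1) * (1 + t*x) ^ (-(a+1))) ≤ x ^ (-b) / b := by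
    intro x hx
    have hx0 : (0:ℝ) < x := by linarith
    have hxi0 : (0:ℝ) < x⁻¹ := by positivity
    have hxi : x⁻¹ ≤ 1/2 := by
      rw [inv_le_comm₀ hx0 (by norm_num)]; linarith
    have Iw : IntervalIntegrable (fun t : ℝ => t ^ (b-1) * (1-t) ^ (c-b-1) * (1 + t*x) ^ (-(a+1))) volume 0 1 :=
      aux_integrable hp hq ha hx0.le
    have Itw : IntervalIntegrable (fun t : ℝ => t ^ b * (1-t) ^ (c-b-1) * (1 + t*x) ^ (-(a+1))) volume 0 1 :=
      aux_integrable hp' hq ha hx0.le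
    have hr_nonneg : ∀ t : ℝ, t ∈ Icc (0:ℝ) 1 → 0 ≤ (1 + t*x) ^ (-(a+1)) := by
      intro t ht; exact Real.rpow_nonneg (by nlinarith [ht.1]) _
    have htw_nonneg : ∀ t ∈ Icc (0:ℝ) 1, 0 ≤ t ^ b * (1-t) ^ (c-b-1) * (1 + t*x) ^ (-(a+1)) := by
      intro t ht
      exact mul_nonneg (mul_nonneg (Real.rpow_nonneg ht.1 _)
        (Real.rpow_nonneg (by linarith [ht.2]) _)) (hr_nonneg t ht)
    have hw_nonneg : ∀ t ∈ Icc (0:ℝ) 1, 0 ≤ t ^ (b-1) * (1-t) ^ (c-b-1) * (1 + t*x) ^ (-(a+1)) := by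
      intro t ht
      exact mul_nonneg (mul_nonneg (Real.rpow_nonneg ht.1 _)
        (Real.rpow_nonneg (by linarith [ht.2]) _)) (hr_nonneg t ht)
    have Iu : IntervalIntegrable (fun t : ℝ => t ^ (b-1) * (1 + t*x) ^ (-(a+1))) volume 0 (1/2) := by
      apply (intervalIntegrable_rpow' hp).mul_continuousOn
      apply aux_cont_r hx0.le
      rw [uIcc_of_le (by norm_num : (0:ℝ) ≤ 1/2)]
      exact Icc_subset_Icc le_rfl (by norm_num)
    refine ⟨?_, ?_, ?_, ?_⟩
    · -- N lower bound
      have pt : ∀ t ∈ Icc (1/4:ℝ) (1/2:ℝ),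
          (4:ℝ)⁻¹ ^ b * m2 * (2*x) ^ (-(a+1)) ≤ t ^ b * (1-t) ^ (c-b-1) * (1 + t*x) ^ (-(a+1)) := by
        intro t ht
        have h1 : (4:ℝ)⁻¹ ^ b ≤ t ^ b := Real.rpow_le_rpow (by norm_num) (by linarith [ht.1]) hb0.le
        have h2 : m2 ≤ (1-t) ^ (c-b-1) := aux_mbound ⟨by linarith [ht.1], ht.2⟩
        have h3 : (2*x) ^ (-(a+1)) ≤ (1 + t*x) ^ (-(a+1)) := by
          apply Real.rpow_le_rpow_of_nonpos (by nlinarith [ht.1]) (by nlinarith [ht.2]) (by linarith)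
        have h4 : (0:ℝ) ≤ (4:ℝ)⁻¹ ^ b := Real.rpow_nonneg (by norm_num) _
        have h5 : (0:ℝ) ≤ t ^ b := Real.rpow_nonneg (by linarith [ht.1]) _
        have h6 : (0:ℝ) ≤ (2*x) ^ (-(a+1)) := Real.rpow_nonneg (by linarith) _
        have h7 : (0:ℝ) ≤ (1-t) ^ (c-b-1) := Real.rpow_nonneg (by linarith [ht.2]) _
        exact mul_le_mul (mul_le_mul h1 h2 hm20.le h5) h3 h6 (mul_nonneg h5 h7)
      have step : (1/4:ℝ) * ((4:ℝ)⁻¹ ^ b * m2 * (2*x) ^ (-(a+1))) ≤ fN x := by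
        have e1 : ∫ _t in (1/4:ℝ)..(1/2:ℝ), (4:ℝ)⁻¹ ^ b * m2 * (2*x) ^ (-(a+1))
            = (1/4:ℝ) * ((4:ℝ)⁻¹ ^ b * m2 * (2*x) ^ (-(a+1))) := by
          rw [intervalIntegral.integral_const, smul_eq_mul]
          norm_num
        rw [← e1]
        calc (∫ _t in (1/4:ℝ)..(1/2:ℝ), (4:ℝ)⁻¹ ^ b * m2 * (2*x) ^ (-(a+1)))
            ≤ ∫ t in (1/4:ℝ)..(1/2:ℝ), t ^ b * (1-t) ^ (c-b-1) * (1 + t*x) ^ (-(a+1)) :=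
              intervalIntegral.integral_mono_on (by norm_num) intervalIntegrable_const
                (aux_mono' Itw (by norm_num) (by norm_num) (by norm_num)) pt
          _ ≤ fN x := aux_sub_integral_le (by norm_num) (by norm_num) (by norm_num) htw_nonneg Itw
      exact step
    · -- fN ≤ fD
      apply intervalIntegral.integral_mono_on zero_le_one Itw Iw
      intro t ht
      rcases eq_or_lt_of_le ht.1 with h0 | h0
      · rw [← h0]
        rw [Real.zero_rpow hb0.ne']
        simpa using hw_nonneg 0 (by simp)
      · have h1 : t ^ b ≤ t ^ (b-1) :=
          Real.rpow_le_rpow_of_exponent_ge h0 ht.2 (by linarith)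
        have h2 := Real.rpow_nonneg (by linarith [ht.2] : (0:ℝ) ≤ 1 - t) (c-b-1)
        have h3 := hr_nonneg t ht
        exact mul_le_mul_of_nonneg_right (mul_le_mul_of_nonneg_right h1 h2) h3
    · -- fD ≤ M * (part1 + part2) + 2 fN
      have s1 : fD x = (∫ t in (0:ℝ)..(1/2:ℝ), t ^ (b-1) * (1-t) ^ (c-b-1) * (1 + t*x) ^ (-(a+1)))
          + ∫ t in (1/2:ℝ)..(1:ℝ), t ^ (b-1) * (1-t) ^ (c-b-1) * (1 + t*x) ^ (-(a+1)) :=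
        (integral_add_adjacent_intervals (aux_mono' Iw le_rfl (by norm_num) (by norm_num))
          (aux_mono' Iw (by norm_num) (by norm_num) le_rfl)).symm
      have s2 : (∫ t in (1/2:ℝ)..(1:ℝ), t ^ (b-1) * (1-t) ^ (c-b-1) * (1 + t*x) ^ (-(a+1)))
          ≤ 2 * fN x := by
        have pt : ∀ t ∈ Icc (1/2:ℝ) 1,
            t ^ (b-1) * (1-t) ^ (c-b-1) * (1 + t*x) ^ (-(a+1))
              ≤ 2 * (t ^ b * (1-t) ^ (c-b-1) * (1 + t*x) ^ (-(a+1))) := by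
          intro t ht
          have ht0 : (0:ℝ) < t := lt_of_lt_of_le (by norm_num) ht.1
          have e1 : t ^ b = t ^ (b-1) * t := by
            rw [← Real.rpow_add_one ht0.ne' (b-1)]; norm_num
          have hprod : (0:ℝ) ≤ t ^ (b-1) * ((1-t) ^ (c-b-1) * (1 + t*x) ^ (-(a+1))) :=
            mul_nonneg (Real.rpow_nonneg ht0.le _)
              (mul_nonneg (Real.rpow_nonneg (by linarith [ht.2]) _)
              (hr_nonneg t ⟨ht0.le, ht.2⟩))
          rw [e1]
          nlinarith [mul_nonneg hprod (by linarith [ht.1] : (0:ℝ) ≤ 2*t - 1)]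
        calc (∫ t in (1/2:ℝ)..(1:ℝ), t ^ (b-1) * (1-t) ^ (c-b-1) * (1 + t*x) ^ (-(a+1)))
            ≤ ∫ t in (1/2:ℝ)..(1:ℝ), 2 * (t ^ b * (1-t) ^ (c-b-1) * (1 + t*x) ^ (-(a+1))) :=
              intervalIntegral.integral_mono_on (by norm_num)
                (aux_mono' Iw (by norm_num) (by norm_num) le_rfl)
                ((aux_mono' Itw (by norm_num) (by norm_num) le_rfl).const_mul 2) pt
          _ = 2 * ∫ t in (1/2:ℝ)..(1:ℝ), t ^ b * (1-t) ^ (c-b-1) * (1 + t*x) ^ (-(a+1)) :=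
              intervalIntegral.integral_const_mul _ _
          _ ≤ 2 * fN x := by
              have := aux_sub_integral_le (by norm_num : (0:ℝ) ≤ 1/2) (by norm_num : (1/2:ℝ) ≤ 1)
                le_rfl htw_nonneg Itw
              linarith
      have s3 : (∫ t in (0:ℝ)..(1/2:ℝ), t ^ (b-1) * (1-t) ^ (c-b-1) * (1 + t*x) ^ (-(a+1)))
          ≤ M * ∫ t in (0:ℝ)..(1/2:ℝ), t ^ (b-1) * (1 + t*x) ^ (-(a+1)) := by
        have pt : ∀ t ∈ Icc (0:ℝ) (1/2:ℝ),
            t ^ (b-1) * (1-t) ^ (c-b-1) * (1 + t*x) ^ (-(a+1))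
              ≤ M * (t ^ (b-1) * (1 + t*x) ^ (-(a+1))) := by
          intro t ht
          have h1 : (1-t) ^ (c-b-1) ≤ M := aux_Mbound ht
          have h2 : (0:ℝ) ≤ t ^ (b-1) := Real.rpow_nonneg ht.1 _
          have h3 : (0:ℝ) ≤ (1 + t*x) ^ (-(a+1)) := hr_nonneg t ⟨ht.1, le_trans ht.2 (by norm_num)⟩
          calc t ^ (b-1) * (1-t) ^ (c-b-1) * (1 + t*x) ^ (-(a+1))
              ≤ t ^ (b-1) * M * (1 + t*x) ^ (-(a+1)) :=
                mul_le_mul_of_nonneg_right (mul_le_mul_of_nonneg_left h1 h2) h3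
            _ = M * (t ^ (b-1) * (1 + t*x) ^ (-(a+1))) := by ring
        calc (∫ t in (0:ℝ)..(1/2:ℝ), t ^ (b-1) * (1-t) ^ (c-b-1) * (1 + t*x) ^ (-(a+1)))
            ≤ ∫ t in (0:ℝ)..(1/2:ℝ), M * (t ^ (b-1) * (1 + t*x) ^ (-(a+1))) :=
              intervalIntegral.integral_mono_on (by norm_num)
                (aux_mono' Iw le_rfl (by norm_num) (by norm_num)) (Iu.const_mul M) pt
          _ = M * ∫ t in (0:ℝ)..(1/2:ℝ), t ^ (b-1) * (1 + t*x) ^ (-(a+1)) :=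
              intervalIntegral.integral_const_mul _ _
      have s4 : (∫ t in (0:ℝ)..(1/2:ℝ), t ^ (b-1) * (1 + t*x) ^ (-(a+1)))
          = (∫ t in (0:ℝ)..x⁻¹, t ^ (b-1) * (1 + t*x) ^ (-(a+1)))
            + ∫ t in x⁻¹..(1/2:ℝ), t ^ (b-1) * (1 + t*x) ^ (-(a+1)) :=
        (integral_add_adjacent_intervals (aux_mono' Iu le_rfl hxi0.le hxi)
          (aux_mono' Iu hxi0.le hxi le_rfl)).symm
      have s34 := s3
      rw [s4] at s34
      linarith
    · -- part1 ≤ x^(-b)/b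
      have pt : ∀ t ∈ Icc (0:ℝ) x⁻¹,
          t ^ (b-1) * (1 + t*x) ^ (-(a+1)) ≤ t ^ (b-1) := by
        intro t ht
        apply mul_le_of_le_one_right (Real.rpow_nonneg ht.1 _)
        exact Real.rpow_le_one_of_one_le_of_nonpos (by nlinarith [ht.1]) (by linarith)
      calc (∫ t in (0:ℝ)..x⁻¹, t ^ (b-1) * (1 + t*x) ^ (-(a+1)))
          ≤ ∫ t in (0:ℝ)..x⁻¹, t ^ (b-1) :=
            intervalIntegral.integral_mono_on hxi0.le
              (aux_mono' Iu le_rfl hxi0.le hxi) (intervalIntegrable_rpow' hp) pt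
        _ = x ^ (-b) / b := by
            rw [integral_rpow (Or.inl hp)]
            have e1 : b - 1 + 1 = b := by ring
            rw [e1, Real.zero_rpow hb0.ne', Real.inv_rpow hx0.le, ← Real.rpow_neg hx0.le]
            ring
  
  rcases eq_or_lt_of_le hba with hB | hA
  · -- Case B : b = 1 + a
    set m₃ : ℝ := (1/4) * ((4:ℝ)⁻¹ ^ b * m2 * (2:ℝ)^(-(a+1))) with hm₃def
    have h2e : (0:ℝ) < (2:ℝ)^(-(a+1)) := Real.rpow_pos_of_pos (by norm_num) _
    have h4b : (0:ℝ) < (4:ℝ)⁻¹ ^ b := Real.rpow_pos_of_pos (by norm_num) _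
    have hm₃ : 0 < m₃ := by
      rw [hm₃def]
      have := mul_pos (mul_pos h4b hm20) h2e
      linarith
    have hcB : 0 < m₃ / (2*M) := by positivity
    apply tendsto_atTop_mono' atTop
      (f₁ := fun x => min ((m₃/(2*M)) * (x / (1/b + Real.log (x/2)))) (x/4))
    · filter_upwards [eventually_ge_atTop 4] with x hx
      obtain ⟨hNlow, hND, hDle, hp1⟩ := common x hx
      have hx0 : (0:ℝ) < x := by linarith
      have hxi0 : (0:ℝ) < x⁻¹ := by positivity
      have hxi : x⁻¹ ≤ 1/2 := by
        rw [inv_le_comm₀ hx0 (by norm_num)]; linarith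
      have hL0 : 0 < Real.log (x/2) := Real.log_pos (by linarith)
      have hxb0 : (0:ℝ) < x ^ (-b) := Real.rpow_pos_of_pos hx0 _
      have Iu : IntervalIntegrable (fun t : ℝ => t ^ (b-1) * (1 + t*x) ^ (-(a+1))) volume 0 (1/2) := by
        apply (intervalIntegrable_rpow' hp).mul_continuousOn
        apply aux_cont_r hx0.le
        rw [uIcc_of_le (by norm_num : (0:ℝ) ≤ 1/2)]
        exact Icc_subset_Icc le_rfl (by norm_num)
      have h0mem : (0:ℝ) ∉ Set.uIcc x⁻¹ (1/2:ℝ) := by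
        rw [uIcc_of_le hxi]
        intro h
        exact absurd h.1 (not_le.mpr hxi0)
      set L := Real.log (x/2) with hLdef
      have hp2 : (∫ t in x⁻¹..(1/2:ℝ), t ^ (b-1) * (1 + t*x) ^ (-(a+1))) ≤ x ^ (-b) * L := by
        have pt : ∀ t ∈ Icc x⁻¹ (1/2:ℝ),
            t ^ (b-1) * (1 + t*x) ^ (-(a+1)) ≤ x ^ (-b) * t⁻¹ := by
          intro t ht
          have ht0 : (0:ℝ) < t := lt_of_lt_of_le hxi0 ht.1
          have c1 : (1 + t*x) ^ (-(a+1)) ≤ (t*x) ^ (-(a+1)) :=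
            Real.rpow_le_rpow_of_nonpos (by positivity) (by nlinarith) (by linarith)
          have c2 : (t*x) ^ (-(a+1)) = t ^ (-(a+1)) * x ^ (-(a+1)) :=
            Real.mul_rpow ht0.le hx0.le
          calc t ^ (b-1) * (1 + t*x) ^ (-(a+1))
              ≤ t ^ (b-1) * (t*x) ^ (-(a+1)) :=
                mul_le_mul_of_nonneg_left c1 (Real.rpow_nonneg ht0.le _)
            _ = x ^ (-(a+1)) * (t ^ (b-1) * t ^ (-(a+1))) := by rw [c2]; ring
            _ = x ^ (-b) * t⁻¹ := by
                rw [← Real.rpow_add ht0, show b - 1 + -(a+1) = -1 from by rw [hB]; ring,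
                  Real.rpow_neg_one, show -(a+1) = -b from by rw [hB]; ring]
        have Iinv : IntervalIntegrable (fun t : ℝ => t⁻¹) volume x⁻¹ (1/2) := by
          apply intervalIntegrable_inv
          · intro t ht
            rw [uIcc_of_le hxi] at ht
            exact ne_of_gt (lt_of_lt_of_le hxi0 ht.1)
          · exact continuousOn_id
        calc (∫ t in x⁻¹..(1/2:ℝ), t ^ (b-1) * (1 + t*x) ^ (-(a+1)))
            ≤ ∫ t in x⁻¹..(1/2:ℝ), x ^ (-b) * t⁻¹ :=
              intervalIntegral.integral_mono_on hxi (aux_mono' Iu hxi0.le hxi le_rfl)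
                (Iinv.const_mul _) pt
          _ = x ^ (-b) * L := by
              rw [intervalIntegral.integral_const_mul, integral_inv h0mem, hLdef,
                show ((1:ℝ)/2) / x⁻¹ = x / 2 from by field_simp]
      set N₀ : ℝ := m₃ * x ^ (-(a+1)) with hN₀def
      have hN₀pos : 0 < N₀ := mul_pos hm₃ (Real.rpow_pos_of_pos hx0 _)
      have hN₀le : N₀ ≤ fN x := by
        have e1 : (1/4:ℝ) * ((4:ℝ)⁻¹ ^ b * m2 * (2*x) ^ (-(a+1))) = N₀ := by
          rw [hN₀def, hm₃def, Real.mul_rpow (by norm_num) hx0.le]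
          ring
        linarith [e1 ▸ hNlow]
      set P : ℝ := M * (x ^ (-b) * (1/b + L)) with hPdef
      have hbL : 0 < 1/b + L := by positivity
      have hP0 : 0 < P := by positivity
      have hDP : fD x ≤ P + 2 * fN x := by
        have h1 : M * ((∫ t in (0:ℝ)..x⁻¹, t ^ (b-1) * (1 + t*x) ^ (-(a+1))) +
            (∫ t in x⁻¹..(1/2:ℝ), t ^ (b-1) * (1 + t*x) ^ (-(a+1))))
            ≤ M * (x ^ (-b)/b + x ^ (-b) * L) :=
          mul_le_mul_of_nonneg_left (add_le_add hp1 hp2) hM0.le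
        have h2 : M * (x ^ (-b)/b + x ^ (-b) * L) = P := by
          rw [hPdef]; ring
        linarith
      have hfD0 : 0 < fD x := lt_of_lt_of_le hN₀pos (le_trans hN₀le hND)
      have key := aux_ratio_ge hx0 hN₀pos hN₀le hP0 hfD0 hDP
      have heq : x * N₀ / (2 * P) = (m₃/(2*M)) * (x / (1/b + L)) := by
        rw [hN₀def, hPdef, show -(a+1) = -b from by rw [hB]; ring]
        have h1 : x ^ (-b) ≠ 0 := ne_of_gt hxb0
        have h2 : (1/b + L) ≠ 0 := ne_of_gt hbL
        field_simp
      rw [heq] at key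
      exact key
    · apply aux_min_atTop
      · exact Tendsto.const_mul_atTop hcB (aux_x_div_log (1/b))
      · exact tendsto_id.atTop_div_const (by norm_num)
  · -- Case A : b < 1 + a
    have hd0 : (0:ℝ) < 1 + a - b := by linarith
    set Cb : ℝ := 1/b + 1/(1+a-b) with hCbdef
    have hCb0 : 0 < Cb := by positivity
    set c₀ : ℝ := m2 * (2:ℝ)^(-(a+1)) / (2*M*Cb) with hc₀def
    have h2e : (0:ℝ) < (2:ℝ)^(-(a+1)) := Real.rpow_pos_of_pos (by norm_num) _
    have hc₀ : 0 < c₀ := by positivity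
    apply tendsto_atTop_mono' atTop
      (f₁ := fun x => min (c₀ * Real.log (x/2)) (x/4))
    · filter_upwards [eventually_ge_atTop 4] with x hx
      obtain ⟨hNlow, hND, hDle, hp1⟩ := common x hx
      have hx0 : (0:ℝ) < x := by linarith
      have hxi0 : (0:ℝ) < x⁻¹ := by positivity
      have hxi : x⁻¹ ≤ 1/2 := by
        rw [inv_le_comm₀ hx0 (by norm_num)]; linarith
      have hL0 : 0 < Real.log (x/2) := Real.log_pos (by linarith)
      have hxb0 : (0:ℝ) < x ^ (-b) := Real.rpow_pos_of_pos hx0 _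
      have Iw : IntervalIntegrable (fun t : ℝ => t ^ (b-1) * (1-t) ^ (c-b-1) * (1 + t*x) ^ (-(a+1))) volume 0 1 :=
        aux_integrable hp hq ha hx0.le
      have Itw : IntervalIntegrable (fun t : ℝ => t ^ b * (1-t) ^ (c-b-1) * (1 + t*x) ^ (-(a+1))) volume 0 1 :=
        aux_integrable hp' hq ha hx0.le
      have Iu : IntervalIntegrable (fun t : ℝ => t ^ (b-1) * (1 + t*x) ^ (-(a+1))) volume 0 (1/2) := by
        apply (intervalIntegrable_rpow' hp).mul_continuousOn
        apply aux_cont_r hx0.le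
        rw [uIcc_of_le (by norm_num : (0:ℝ) ≤ 1/2)]
        exact Icc_subset_Icc le_rfl (by norm_num)
      have hr_nonneg : ∀ t : ℝ, t ∈ Icc (0:ℝ) 1 → 0 ≤ (1 + t*x) ^ (-(a+1)) := by
        intro t ht; exact Real.rpow_nonneg (by nlinarith [ht.1]) _
      have htw_nonneg : ∀ t ∈ Icc (0:ℝ) 1, 0 ≤ t ^ b * (1-t) ^ (c-b-1) * (1 + t*x) ^ (-(a+1)) := by
        intro t ht
        exact mul_nonneg (mul_nonneg (Real.rpow_nonneg ht.1 _)
          (Real.rpow_nonneg (by linarith [ht.2]) _)) (hr_nonneg t ht)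
      have h0mem : (0:ℝ) ∉ Set.uIcc x⁻¹ (1/2:ℝ) := by
        rw [uIcc_of_le hxi]
        intro h
        exact absurd h.1 (not_le.mpr hxi0)
      -- part2 bound
      have hp2 : (∫ t in x⁻¹..(1/2:ℝ), t ^ (b-1) * (1 + t*x) ^ (-(a+1))) ≤ x ^ (-b) / (1+a-b) := by
        have pt : ∀ t ∈ Icc x⁻¹ (1/2:ℝ),
            t ^ (b-1) * (1 + t*x) ^ (-(a+1)) ≤ x ^ (-(a+1)) * t ^ (b-a-2) := by
          intro t ht
          have ht0 : (0:ℝ) < t := lt_of_lt_of_le hxi0 ht.1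
          have c1 : (1 + t*x) ^ (-(a+1)) ≤ (t*x) ^ (-(a+1)) :=
            Real.rpow_le_rpow_of_nonpos (by positivity) (by nlinarith) (by linarith)
          have c2 : (t*x) ^ (-(a+1)) = t ^ (-(a+1)) * x ^ (-(a+1)) :=
            Real.mul_rpow ht0.le hx0.le
          calc t ^ (b-1) * (1 + t*x) ^ (-(a+1))
              ≤ t ^ (b-1) * (t*x) ^ (-(a+1)) :=
                mul_le_mul_of_nonneg_left c1 (Real.rpow_nonneg ht0.le _)
            _ = x ^ (-(a+1)) * (t ^ (b-1) * t ^ (-(a+1))) := by rw [c2]; ring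
            _ = x ^ (-(a+1)) * t ^ (b-a-2) := by
                rw [← Real.rpow_add ht0, show b - 1 + -(a+1) = b-a-2 from by ring]
        have hne : b - a - 2 ≠ -1 := by intro h; linarith
        have Irpow : IntervalIntegrable (fun t : ℝ => t ^ (b-a-2)) volume x⁻¹ (1/2) :=
          intervalIntegrable_rpow (Or.inr h0mem)
        calc (∫ t in x⁻¹..(1/2:ℝ), t ^ (b-1) * (1 + t*x) ^ (-(a+1)))
            ≤ ∫ t in x⁻¹..(1/2:ℝ), x ^ (-(a+1)) * t ^ (b-a-2) :=
              intervalIntegral.integral_mono_on hxi (aux_mono' Iu hxi0.le hxi le_rfl)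
                (Irpow.const_mul _) pt
          _ = x ^ (-(a+1)) * ∫ t in x⁻¹..(1/2:ℝ), t ^ (b-a-2) :=
              intervalIntegral.integral_const_mul _ _
          _ = x ^ (-(a+1)) * ((((1:ℝ)/2) ^ (b-a-1) - (x⁻¹) ^ (b-a-1)) / (b-a-1)) := by
              rw [integral_rpow (Or.inr ⟨hne, h0mem⟩), show b-a-2+1 = b-a-1 from by ring]
          _ ≤ x ^ (-b) / (1+a-b) := by
              have h1 : ((1:ℝ)/2) ^ (b-a-1) ≤ (x⁻¹) ^ (b-a-1) :=
                Real.rpow_le_rpow_of_nonpos hxi0 hxi (by linarith)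
              have h2' : (0:ℝ) ≤ ((1:ℝ)/2) ^ (b-a-1) := Real.rpow_nonneg (by norm_num) _
              have hbd : b - a - 1 = -(1+a-b) := by ring
              have h3 : (((1:ℝ)/2) ^ (b-a-1) - (x⁻¹) ^ (b-a-1)) / (b-a-1)
                  ≤ (x⁻¹) ^ (b-a-1) / (1+a-b) := by
                rw [hbd, div_neg, ← neg_div, neg_sub]
                apply div_le_div_of_nonneg_right ?_ hd0.le
                · rw [← hbd]; linarith
              have h4 : x ^ (-(a+1)) * ((x⁻¹) ^ (b-a-1) / (1+a-b)) = x ^ (-b) / (1+a-b) := by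
                rw [Real.inv_rpow hx0.le, ← Real.rpow_neg hx0.le, ← mul_div_assoc,
                  ← Real.rpow_add hx0, show -(a+1) + -(b-a-1) = -b from by ring]
              calc x ^ (-(a+1)) * ((((1:ℝ)/2) ^ (b-a-1) - (x⁻¹) ^ (b-a-1)) / (b-a-1))
                  ≤ x ^ (-(a+1)) * ((x⁻¹) ^ (b-a-1) / (1+a-b)) :=
                    mul_le_mul_of_nonneg_left h3 (Real.rpow_nonneg hx0.le _)
                _ = x ^ (-b) / (1+a-b) := h4
      -- N lower bound with log
      set L := Real.log (x/2) with hLdef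
      set N₀ : ℝ := m2 * (2:ℝ)^(-(a+1)) * x ^ (-(b+1)) * L with hN₀def
      have hN₀pos : 0 < N₀ := by
        apply mul_pos (mul_pos (mul_pos hm20 h2e) (Real.rpow_pos_of_pos hx0 _)) hL0
      have hN₀le : N₀ ≤ fN x := by
        set K : ℝ := m2 * ((2:ℝ)^(-(a+1)) * (x ^ (-(a+1)) * x ^ (a-b))) with hKdef
        have pt : ∀ t ∈ Icc x⁻¹ (1/2:ℝ),
            K * t⁻¹ ≤ t ^ b * (1-t) ^ (c-b-1) * (1 + t*x) ^ (-(a+1)) := by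
          intro t ht
          have ht0 : (0:ℝ) < t := lt_of_lt_of_le hxi0 ht.1
          have htx : (1:ℝ) ≤ t * x := by
            have h := mul_le_mul_of_nonneg_right ht.1 hx0.le
            rwa [inv_mul_cancel₀ hx0.ne'] at h
          have c1 : (2*(t*x)) ^ (-(a+1)) ≤ (1 + t*x) ^ (-(a+1)) :=
            Real.rpow_le_rpow_of_nonpos (by nlinarith) (by nlinarith) (by linarith)
          have c2 : (2*(t*x)) ^ (-(a+1)) = (2:ℝ)^(-(a+1)) * (t ^ (-(a+1)) * x ^ (-(a+1))) := by
            rw [Real.mul_rpow (by norm_num) (by positivity), Real.mul_rpow ht0.le hx0.le]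
          have c3 : m2 ≤ (1-t) ^ (c-b-1) := aux_mbound ⟨ht0.le, ht.2⟩
          have c4 : x ^ (a-b) ≤ t ^ (b-a) := by
            have h := Real.rpow_le_rpow hxi0.le ht.1 (by linarith : (0:ℝ) ≤ b-a)
            rwa [Real.inv_rpow hx0.le, ← Real.rpow_neg hx0.le,
              show -(b-a) = a-b from by ring] at h
          have d0 : (0:ℝ) ≤ t ^ b := Real.rpow_nonneg ht0.le _
          have d0' : (0:ℝ) ≤ (1-t) ^ (c-b-1) := Real.rpow_nonneg (by linarith [ht.2]) _
          have d1 : t ^ b * m2 * ((2:ℝ)^(-(a+1)) * (t ^ (-(a+1)) * x ^ (-(a+1))))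
              ≤ t ^ b * (1-t) ^ (c-b-1) * (1 + t*x) ^ (-(a+1)) := by
            have e1 : t ^ b * m2 * ((2:ℝ)^(-(a+1)) * (t ^ (-(a+1)) * x ^ (-(a+1))))
                ≤ t ^ b * (1-t) ^ (c-b-1) * ((2:ℝ)^(-(a+1)) * (t ^ (-(a+1)) * x ^ (-(a+1)))) := by
              apply mul_le_mul_of_nonneg_right (mul_le_mul_of_nonneg_left c3 d0)
              positivity
            have e2 : t ^ b * (1-t) ^ (c-b-1) * ((2:ℝ)^(-(a+1)) * (t ^ (-(a+1)) * x ^ (-(a+1))))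
                ≤ t ^ b * (1-t) ^ (c-b-1) * (1 + t*x) ^ (-(a+1)) := by
              rw [← c2]
              exact mul_le_mul_of_nonneg_left c1 (mul_nonneg d0 d0')
            linarith
          have d2 : t ^ b * m2 * ((2:ℝ)^(-(a+1)) * (t ^ (-(a+1)) * x ^ (-(a+1))))
              = m2 * ((2:ℝ)^(-(a+1)) * (x ^ (-(a+1)) * (t ^ (b-a) * t⁻¹))) := by
            rw [show t ^ b * m2 * ((2:ℝ)^(-(a+1)) * (t ^ (-(a+1)) * x ^ (-(a+1))))
                = m2 * ((2:ℝ)^(-(a+1)) * (x ^ (-(a+1)) * (t ^ b * t ^ (-(a+1))))) from by ring,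
              ← Real.rpow_add ht0, show b + -(a+1) = (b-a) + (-1) from by ring,
              Real.rpow_add ht0, Real.rpow_neg_one]
          have d3 : K * t⁻¹ ≤ m2 * ((2:ℝ)^(-(a+1)) * (x ^ (-(a+1)) * (t ^ (b-a) * t⁻¹)))  := by
            rw [hKdef]
            have : x ^ (a-b) * t⁻¹ ≤ t ^ (b-a) * t⁻¹ :=
              mul_le_mul_of_nonneg_right c4 (inv_nonneg.mpr ht0.le)
            calc m2 * ((2:ℝ)^(-(a+1)) * (x ^ (-(a+1)) * x ^ (a-b))) * t⁻¹
                = m2 * ((2:ℝ)^(-(a+1)) * (x ^ (-(a+1)) * (x ^ (a-b) * t⁻¹))) := by ring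
              _ ≤ m2 * ((2:ℝ)^(-(a+1)) * (x ^ (-(a+1)) * (t ^ (b-a) * t⁻¹))) := by
                  apply mul_le_mul_of_nonneg_left ?_ hm20.le
                  apply mul_le_mul_of_nonneg_left ?_ h2e.le
                  exact mul_le_mul_of_nonneg_left this (Real.rpow_nonneg hx0.le _)
          rw [d2] at d1
          linarith
        have Iinv : IntervalIntegrable (fun t : ℝ => t⁻¹) volume x⁻¹ (1/2) := by
          apply intervalIntegrable_inv
          · intro t ht
            rw [uIcc_of_le hxi] at ht
            exact ne_of_gt (lt_of_lt_of_le hxi0 ht.1)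
          · exact continuousOn_id
        have n2 : (∫ t in x⁻¹..(1/2:ℝ), K * t⁻¹)
            ≤ ∫ t in x⁻¹..(1/2:ℝ), t ^ b * (1-t) ^ (c-b-1) * (1 + t*x) ^ (-(a+1)) :=
          intervalIntegral.integral_mono_on hxi (Iinv.const_mul K)
            (aux_mono' Itw hxi0.le hxi (by norm_num)) pt
        have n3 : (∫ t in x⁻¹..(1/2:ℝ), K * t⁻¹) = K * L := by
          rw [intervalIntegral.integral_const_mul, integral_inv h0mem, hLdef,
            show ((1:ℝ)/2) / x⁻¹ = x / 2 from by field_simp]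
        have n4 : K * L = N₀ := by
          rw [hKdef, hN₀def, ← Real.rpow_add hx0, show -(a+1) + (a-b) = -(b+1) from by ring]
          ring
        have n5 : (∫ t in x⁻¹..(1/2:ℝ), t ^ b * (1-t) ^ (c-b-1) * (1 + t*x) ^ (-(a+1))) ≤ fN x :=
          aux_sub_integral_le hxi0.le hxi (by norm_num) htw_nonneg Itw
        rw [n3, n4] at n2
        linarith
      -- assemble
      set P : ℝ := M * Cb * x ^ (-b) with hPdef
      have hP0 : 0 < P := by positivity
      have hDP : fD x ≤ P + 2 * fN x := by
        have h1 : M * ((∫ t in (0:ℝ)..x⁻¹, t ^ (b-1) * (1 + t*x) ^ (-(a+1))) +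
            (∫ t in x⁻¹..(1/2:ℝ), t ^ (b-1) * (1 + t*x) ^ (-(a+1))))
            ≤ M * (x ^ (-b)/b + x ^ (-b)/(1+a-b)) :=
          mul_le_mul_of_nonneg_left (add_le_add hp1 hp2) hM0.le
        have h2 : M * (x ^ (-b)/b + x ^ (-b)/(1+a-b)) = P := by
          rw [hPdef, hCbdef]; ring
        linarith
      have hfD0 : 0 < fD x := lt_of_lt_of_le hN₀pos (le_trans hN₀le hND)
      have key := aux_ratio_ge hx0 hN₀pos hN₀le hP0 hfD0 hDP
      have heq : x * N₀ / (2 * P) = c₀ * L := by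
        have e1 : x * N₀ = (m2 * (2:ℝ)^(-(a+1)) * L) * x ^ (-b) := by
          rw [hN₀def, show x * (m2 * (2:ℝ)^(-(a+1)) * x ^ (-(b+1)) * L)
              = m2 * (2:ℝ)^(-(a+1)) * L * (x ^ (1:ℝ) * x ^ (-(b+1))) from by
                rw [Real.rpow_one]; ring,
            ← Real.rpow_add hx0, show (1:ℝ) + -(b+1) = -b from by ring]
        rw [e1, hPdef, hc₀def]
        field_simp
      rw [heq] at key
      exact key
    · apply aux_min_atTop
      · exact Tendsto.const_mul_atTop hc₀
          (Real.tendsto_log_atTop.comp (tendsto_id.atTop_div_const (by norm_num)))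
      · exact tendsto_id.atTop_div_const (by norm_num)


lemma aux_alg (x N D G H K bb cc : ℝ) (hG : G ≠ 0) (hH : H ≠ 0) (hK : K ≠ 0)
    (hb : bb ≠ 0) (hc : cc ≠ 0) :
    x * (cc * G / (bb * H * K) * N) / (G / (H * K) * D) = cc / bb * (x * N / D) := by
  rcases eq_or_ne D 0 with hD | hD
  · simp [hD]
  · field_simp

/-- Euler integral representation of the hypergeometric function, valid for
real arguments `x ∉ [1,∞)` when `0 < b < c`. -/
noncomputable def hyperFE (a b c x : ℝ) : ℝ :=
  (Real.Gamma c / (Real.Gamma b * Real.Gamma (c - b))) *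
    ∫ t in (0:ℝ)..1, t ^ (b - 1) * (1 - t) ^ (c - b - 1) * (1 - t * x) ^ (-a)

theorem stmt_5 (a b c : ℝ) (ha : 0 < a) (hab : a ≤ b) (hba : b ≤ 1 + a) (hbc : b < c) :
    Tendsto (fun x : ℝ =>
        x * hyperFE (a + 1) (b + 1) (c + 1) (-x) / hyperFE (a + 1) b c (-x))
      atTop atTop := by
  have hb0 : 0 < b := lt_of_lt_of_le ha hab
  have hc0 : 0 < c := lt_trans hb0 hbc
  have hGb : 0 < Real.Gamma b := Real.Gamma_pos_of_pos hb0
  have hGc : 0 < Real.Gamma c := Real.Gamma_pos_of_pos hc0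
  have hGcb : 0 < Real.Gamma (c - b) := Real.Gamma_pos_of_pos (by linarith)
  have heq : ∀ x : ℝ, x * hyperFE (a + 1) (b + 1) (c + 1) (-x) / hyperFE (a + 1) b c (-x)
      = (c / b) * (x * (∫ t in (0:ℝ)..1, t ^ b * (1-t) ^ (c-b-1) * (1 + t*x) ^ (-(a+1))) /
        (∫ t in (0:ℝ)..1, t ^ (b-1) * (1-t) ^ (c-b-1) * (1 + t*x) ^ (-(a+1)))) := by
    intro x
    simp only [hyperFE]
    have e1 : (∫ t in (0:ℝ)..1, t ^ (b+1-1) * (1-t) ^ (c+1-(b+1)-1) * (1 - t * (-x)) ^ (-(a+1)))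
        = ∫ t in (0:ℝ)..1, t ^ b * (1-t) ^ (c-b-1) * (1 + t*x) ^ (-(a+1)) := by
      apply intervalIntegral.integral_congr
      intro t _
      ring_nf
    have e2 : (∫ t in (0:ℝ)..1, t ^ (b-1) * (1-t) ^ (c-b-1) * (1 - t * (-x)) ^ (-(a+1)))
        = ∫ t in (0:ℝ)..1, t ^ (b-1) * (1-t) ^ (c-b-1) * (1 + t*x) ^ (-(a+1)) := by
      apply intervalIntegral.integral_congr
      intro t _
      ring_nf
    rw [e1, e2]
    have e3 : c + 1 - (b + 1) = c - b := by ring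
    rw [e3, Real.Gamma_add_one hc0.ne', Real.Gamma_add_one hb0.ne']
    exact aux_alg x _ _ _ _ _ _ _ (ne_of_gt hGc) (ne_of_gt hGb) (ne_of_gt hGcb)
      (ne_of_gt hb0) (ne_of_gt hc0)
  have hcore := aux_core a b c ha hab hba hbc
  have h2 := Tendsto.const_mul_atTop (div_pos hc0 hb0) hcore
  exact Tendsto.congr (fun x => (heq x).symm) h2
end

section
/- Let a, b be positive real constants and c = 1 + a + b. Then there exist C > 0 and δ ∈ (0,1) such that for every z ∈ 𝔻 with |1 − z| < δ one has F(a,b;c;z) ≠ 0 and |F(a+1,b;c;z)/F(a,b;c;z) + b·Log(1 − z)| ≤ C, where Log denotes the principal branch of the complex logarithm. -/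
open Complex Filter MeasureTheory Metric Set

/-- The Gaussian hypergeometric function on the unit disc (power series). -/
noncomputable def hyperF (a b c : ℝ) (z : ℂ) : ℂ :=
  ∑' n : ℕ, (((ascPochhammer ℝ n).eval a * (ascPochhammer ℝ n).eval b /
      ((ascPochhammer ℝ n).eval c * (n.factorial : ℝ)) : ℝ) : ℂ) * z ^ n

namespace Stmt6Aux

lemma poch_pos {x : ℝ} (hx : 0 < x) (n : ℕ) : 0 < (ascPochhammer ℝ n).eval x := by
  induction n with
  | zero => simpa using one_pos
  | succ n ih =>
      rw [ascPochhammer_succ_eval]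
      positivity

/-- coefficient sequence of F(a,b;1+a+b;·) -/
noncomputable def pA (a b : ℝ) (n : ℕ) : ℝ :=
  (ascPochhammer ℝ n).eval a * (ascPochhammer ℝ n).eval b /
    ((ascPochhammer ℝ n).eval (1 + a + b) * (n.factorial : ℝ))

variable {a b : ℝ} (ha : 0 < a) (hb : 0 < b)

include ha hb in
lemma c_pos : (0:ℝ) < 1 + a + b := by linarith

lemma pA_zero : pA a b 0 = 1 := by simp [pA]

include ha hb in
lemma pA_pos (n : ℕ) : 0 < pA a b n := by
  have := poch_pos ha n
  have := poch_pos hb n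
  have := poch_pos (show (0:ℝ) < 1 + a + b by linarith) n
  have : (0:ℝ) < n.factorial := by positivity
  apply div_pos <;> positivity

include ha hb in
lemma pA_succ (n : ℕ) :
    pA a b (n + 1) = pA a b n * ((a + n) * (b + n)) / ((1 + a + b + n) * (n + 1)) := by
  have h1 := poch_pos ha n
  have h2 := poch_pos hb n
  have h3 := poch_pos (show (0:ℝ) < 1 + a + b by linarith) n
  have h4 : (0:ℝ) < n.factorial := by positivity
  rw [pA, pA, ascPochhammer_succ_eval, ascPochhammer_succ_eval, ascPochhammer_succ_eval,
    Nat.factorial_succ]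
  push_cast
  field_simp

include ha hb in
lemma pA_master (n : ℕ) :
    ∑ j ∈ Finset.range (n + 1), pA a b j = (n + 1) * (1 + a + b + n) * pA a b (n + 1) / (a * b) := by
  induction n with
  | zero =>
      rw [Finset.sum_range_one, pA_zero, pA_succ ha hb 0, pA_zero]
      field_simp
      simp
  | succ n ih =>
      rw [Finset.sum_range_succ, ih, pA_succ ha hb (n+1)]
      have hA := pA_pos ha hb (n+1)
      have h5 : (0:ℝ) < 1 + a + b + n := by positivity
      push_cast
      field_simp
      ring

end Stmt6Aux

namespace Stmt6Aux
variable {a b : ℝ} (ha : 0 < a) (hb : 0 < b)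

include ha hb in
lemma pA_from_sum (n : ℕ) :
    pA a b (n + 1) = a * b * (∑ j ∈ Finset.range (n + 1), pA a b j) /
      ((n + 1) * (1 + a + b + n)) := by
  rw [pA_master ha hb n]
  have hA := pA_pos ha hb (n+1)
  have h5 : (0:ℝ) < 1 + a + b + n := by positivity
  field_simp

include ha hb in
lemma pA_sum_le_aux (n : ℕ) :
    ∑ j ∈ Finset.range (n + 1), pA a b j ≤ Real.exp (a * b * (2 - 2 / (n + 1))) := by
  induction n with
  | zero =>
      rw [Finset.sum_range_one, pA_zero]
      norm_num
  | succ n ih =>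
      have hs : (0:ℝ) ≤ ∑ j ∈ Finset.range (n + 1), pA a b j :=
        Finset.sum_nonneg fun j _ => (pA_pos ha hb j).le
      rw [Finset.sum_range_succ, pA_from_sum ha hb n]
      push_cast
      have hn1 : (0:ℝ) < (n:ℝ) + 1 := by positivity
      have hcn : (0:ℝ) < 1 + a + b + n := by positivity
      have key : (∑ j ∈ Finset.range (n + 1), pA a b j) +
          a * b * (∑ j ∈ Finset.range (n + 1), pA a b j) / ((n + 1) * (1 + a + b + n))
          = (∑ j ∈ Finset.range (n + 1), pA a b j) *
            (1 + a * b / ((n + 1) * (1 + a + b + n))) := by ring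
      rw [key]
      have ht : a * b / (((n:ℝ) + 1) * (1 + a + b + n)) ≤ 2 * (a*b) / ((n + 1) * (n + 2)) := by
        rw [div_le_div_iff₀ (by positivity) (by positivity)]
        nlinarith [mul_pos (mul_pos (mul_pos ha hb) hn1)
          (show (0:ℝ) < 2*a + 2*b + n by positivity)]
      have h1t : 1 + a * b / (((n:ℝ) + 1) * (1 + a + b + n)) ≤
          Real.exp (2 * (a*b) / ((n + 1) * (n + 2))) := by
        refine le_trans (by linarith) (Real.add_one_le_exp _)
      calc (∑ j ∈ Finset.range (n + 1), pA a b j) *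
            (1 + a * b / ((n + 1) * (1 + a + b + n)))
          ≤ Real.exp (a * b * (2 - 2 / (n + 1))) * Real.exp (2 * (a*b) / ((n + 1) * (n + 2))) := by
            apply mul_le_mul ih h1t (by positivity) (Real.exp_pos _).le
        _ = Real.exp (a * b * (2 - 2 / ((n:ℝ) + 1 + 1))) := by
            rw [← Real.exp_add]
            congr 1
            have h2 : ((n:ℝ) + 2) ≠ 0 := by positivity
            field_simp
            ring

include ha hb in
lemma pA_sum_le (N : ℕ) :
    ∑ j ∈ Finset.range N, pA a b j ≤ Real.exp (2 * (a * b)) := by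
  cases N with
  | zero => simp [(Real.exp_pos _).le]
  | succ n =>
      refine le_trans (pA_sum_le_aux ha hb n) (Real.exp_le_exp.2 ?_)
      have hn1 : (0:ℝ) < 2 / ((n:ℝ) + 1) := by positivity
      nlinarith [mul_pos ha hb]

include ha hb in
lemma summable_pA : Summable (pA a b) :=
  summable_of_sum_range_le (fun n => (pA_pos ha hb n).le) (pA_sum_le ha hb)

include ha hb in
lemma pA_le (n : ℕ) :
    pA a b (n + 1) ≤ a * b * Real.exp (2 * (a * b)) / ((n + 1 : ℝ)^2) := by
  rw [pA_from_sum ha hb n]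
  have hn1 : (0:ℝ) < (n:ℝ) + 1 := by positivity
  have hcn : (0:ℝ) < 1 + a + b + n := by positivity
  rw [div_le_div_iff₀ (by positivity) (by positivity)]
  have hs := pA_sum_le ha hb (n+1)
  have h1 : ((n:ℝ)+1)^2 ≤ (n+1) * (1 + a + b + n) := by nlinarith
  have hsnn : (0:ℝ) ≤ ∑ j ∈ Finset.range (n + 1), pA a b j :=
    Finset.sum_nonneg fun j _ => (pA_pos ha hb j).le
  calc a * b * (∑ j ∈ Finset.range (n + 1), pA a b j) * ((n+1:ℝ)^2)
      ≤ a * b * Real.exp (2*(a*b)) * ((n+1:ℝ)^2) := by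
        have : a * b * (∑ j ∈ Finset.range (n + 1), pA a b j) ≤ a * b * Real.exp (2*(a*b)) :=
          mul_le_mul_of_nonneg_left hs (by positivity)
        exact mul_le_mul_of_nonneg_right this (by positivity)
    _ ≤ a * b * Real.exp (2 * (a * b)) * ((n + 1) * (1 + a + b + n)) :=
        mul_le_mul_of_nonneg_left h1 (by positivity)

end Stmt6Aux

namespace Stmt6Aux
variable {a b : ℝ} (ha : 0 < a) (hb : 0 < b)

lemma harm_le (m : ℕ) : ∑ k ∈ Finset.range m, (1:ℝ)/(k+1) ≤ 2 * Real.sqrt m := by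
  induction m with
  | zero => simp
  | succ m ih =>
      rw [Finset.sum_range_succ]
      have s0 := Real.sqrt_nonneg (m:ℝ)
      have s1 := Real.sqrt_nonneg ((m:ℝ)+1)
      have h0 : Real.sqrt (m:ℝ) ^ 2 = (m:ℝ) := Real.sq_sqrt (by positivity)
      have h1 : Real.sqrt ((m:ℝ)+1) ^ 2 = (m:ℝ)+1 := Real.sq_sqrt (by positivity)
      have hmono : Real.sqrt (m:ℝ) ≤ Real.sqrt ((m:ℝ)+1) :=
        Real.sqrt_le_sqrt (by linarith)
      have key : (1:ℝ)/((m:ℝ)+1) ≤ 2 * (Real.sqrt ((m:ℝ)+1) - Real.sqrt (m:ℝ)) := by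
        rw [div_le_iff₀ (by positivity)]
        nlinarith [mul_le_mul_of_nonneg_left
          (show Real.sqrt ((m:ℝ)+1) + Real.sqrt (m:ℝ) ≤ 2*((m:ℝ)+1) by nlinarith)
          (sub_nonneg.2 hmono)]
      push_cast
      linarith

/-- log-series Cauchy-product coefficients (times 1/b) -/
noncomputable def w (a b : ℝ) (m : ℕ) : ℝ :=
  ∑ k ∈ Finset.range (m+1), pA a b (m - k) / (k:ℝ)

/-- error coefficients -/
noncomputable def e (a b : ℝ) (m : ℕ) : ℝ := m * pA a b m / a - b * w a b m

lemma w_succ (n : ℕ) :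
    w a b (n+1) = ∑ k ∈ Finset.range (n+1), pA a b (n - k) / ((k:ℝ)+1) := by
  rw [w, Finset.sum_range_succ']
  simp

include ha hb in
lemma sum_reflect_pA (n : ℕ) :
    ∑ k ∈ Finset.range (n+1), pA a b (n - k) = ∑ j ∈ Finset.range (n+1), pA a b j := by
  have := Finset.sum_range_reflect (fun j => pA a b j) (n+1)
  simpa using this

include ha hb in
lemma e_eq (n : ℕ) :
    e a b (n+1) = b * (∑ k ∈ Finset.range (n+1),
        pA a b (n - k) * (1/((n:ℝ)+1) - 1/((k:ℝ)+1))) - (a+b) * pA a b (n+1) / a := by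
  have hmaster := pA_master ha hb n
  have hsr := sum_reflect_pA ha hb n
  rw [e, w_succ]
  have hterm : ∀ k ∈ Finset.range (n+1),
      pA a b (n - k) * (1/((n:ℝ)+1) - 1/((k:ℝ)+1))
        = pA a b (n - k) * (1/((n:ℝ)+1)) - pA a b (n - k) / ((k:ℝ)+1) := by
    intro k _; ring
  rw [Finset.sum_congr rfl hterm, Finset.sum_sub_distrib, ← Finset.sum_mul, hsr, hmaster]
  have hn1 : ((n:ℝ)+1) ≠ 0 := by positivity
  push_cast
  field_simp
  ring

lemma sum_inv_le (n : ℕ) :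
    ∑ k ∈ Finset.range (n+1), (1:ℝ)/((n - k : ℕ):ℝ) ≤ 2 * Real.sqrt ((n:ℝ)+1) := by
  have hrefl := Finset.sum_range_reflect (fun j => (1:ℝ)/((j:ℕ):ℝ)) (n+1)
  simp only [Nat.add_sub_cancel] at hrefl
  calc ∑ k ∈ Finset.range (n+1), (1:ℝ)/((n - k : ℕ):ℝ)
      = ∑ j ∈ Finset.range (n+1), (1:ℝ)/((j:ℕ):ℝ) := hrefl
    _ = (∑ j ∈ Finset.range n, (1:ℝ)/(((j+1 : ℕ)):ℝ)) + 1/((0:ℕ):ℝ) :=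
        Finset.sum_range_succ' _ n
    _ = ∑ j ∈ Finset.range n, (1:ℝ)/((j:ℝ)+1) := by push_cast; ring
    _ ≤ 2 * Real.sqrt (n:ℝ) := by
        have := harm_le n
        simpa using this
    _ ≤ 2 * Real.sqrt ((n:ℝ)+1) := by
        have := Real.sqrt_le_sqrt (show (n:ℝ) ≤ (n:ℝ)+1 by linarith)
        linarith

lemma sum_inv_le' (n : ℕ) :
    ∑ k ∈ Finset.range (n+1), (1:ℝ)/((k:ℝ)+1) ≤ 2 * Real.sqrt ((n:ℝ)+1) := by
  have := harm_le (n+1)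
  push_cast at this
  simpa using this

include ha hb in
lemma e_abs_le (n : ℕ) :
    |e a b (n+1)| ≤ 4 * b * (a * b * Real.exp (2*(a*b))) * Real.sqrt ((n:ℝ)+1) / ((n:ℝ)+1)^2
      + (a+b)/a * pA a b (n+1) := by
  set K := a * b * Real.exp (2*(a*b)) with hK
  have hKpos : 0 < K := by rw [hK]; positivity
  have hApos := pA_pos ha hb
  have hterm : ∀ k ∈ Finset.range (n+1),
      |pA a b (n - k) * (1/((n:ℝ)+1) - 1/((k:ℝ)+1))|
        ≤ K / ((n:ℝ)+1)^2 * (1/((n - k : ℕ):ℝ) + 1/((k:ℝ)+1)) := by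
    intro k hk
    have hk' : k ≤ n := Nat.lt_succ_iff.mp (Finset.mem_range.mp hk)
    have hkr : (k:ℝ) ≤ (n:ℝ) := by exact_mod_cast hk'
    have hd : 1/((n:ℝ)+1) - 1/((k:ℝ)+1) ≤ 0 := by
      rw [sub_nonpos]
      apply one_div_le_one_div_of_le (by positivity) (by linarith)
    rw [abs_mul, abs_of_pos (hApos _), abs_of_nonpos hd, neg_sub]
    have hsub : 1/((k:ℝ)+1) - 1/((n:ℝ)+1) = ((n:ℝ)-k)/(((n:ℝ)+1)*((k:ℝ)+1)) := by
      have h2 : ((n:ℝ)+1) ≠ 0 := by positivity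
      have h3 : ((k:ℝ)+1) ≠ 0 := by positivity
      rw [div_sub_div _ _ h3 h2, eq_div_iff (mul_ne_zero h2 h3), div_mul_eq_mul_div,
        div_eq_iff (mul_ne_zero h3 h2)]
      ring
    rw [hsub]
    rcases eq_or_lt_of_le hk' with rfl | hkn
    · rw [sub_self, zero_div, mul_zero]
      positivity
    · obtain ⟨m, hm⟩ : ∃ m, n - k = m + 1 := ⟨n - k - 1, by omega⟩
      have hple : pA a b (n - k) ≤ K / ((n - k : ℕ):ℝ)^2 := by
        rw [hm, hK]
        push_cast
        exact pA_le ha hb m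
      have hcast : ((n - k : ℕ):ℝ) = (n:ℝ) - k := Nat.cast_sub hk'
      have hkn' : (k:ℝ) < (n:ℝ) := by exact_mod_cast hkn
      calc pA a b (n-k) * (((n:ℝ)-k)/(((n:ℝ)+1)*((k:ℝ)+1)))
          ≤ (K / ((n - k : ℕ):ℝ)^2) * (((n:ℝ)-k)/(((n:ℝ)+1)*((k:ℝ)+1))) := by
            apply mul_le_mul_of_nonneg_right hple
            apply div_nonneg (by linarith) (by positivity)
        _ = K / ((n:ℝ)+1)^2 * (1/((n - k : ℕ):ℝ) + 1/((k:ℝ)+1)) := by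
            rw [hcast]
            have h1 : (n:ℝ) - k ≠ 0 := by linarith
            have h2 : ((n:ℝ)+1) ≠ 0 := by positivity
            have h3 : ((k:ℝ)+1) ≠ 0 := by positivity
            field_simp
            ring
  have hsum : |∑ k ∈ Finset.range (n+1),
      pA a b (n - k) * (1/((n:ℝ)+1) - 1/((k:ℝ)+1))|
        ≤ K / ((n:ℝ)+1)^2 * (4 * Real.sqrt ((n:ℝ)+1)) := by
    calc |∑ k ∈ Finset.range (n+1), pA a b (n - k) * (1/((n:ℝ)+1) - 1/((k:ℝ)+1))|
        ≤ ∑ k ∈ Finset.range (n+1),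
            |pA a b (n - k) * (1/((n:ℝ)+1) - 1/((k:ℝ)+1))| :=
          Finset.abs_sum_le_sum_abs _ _
      _ ≤ ∑ k ∈ Finset.range (n+1),
            K / ((n:ℝ)+1)^2 * (1/((n - k : ℕ):ℝ) + 1/((k:ℝ)+1)) :=
          Finset.sum_le_sum hterm
      _ = K / ((n:ℝ)+1)^2 * ((∑ k ∈ Finset.range (n+1), (1:ℝ)/((n - k : ℕ):ℝ))
            + ∑ k ∈ Finset.range (n+1), (1:ℝ)/((k:ℝ)+1)) := by
          rw [← Finset.mul_sum, Finset.sum_add_distrib]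
      _ ≤ K / ((n:ℝ)+1)^2 * (4 * Real.sqrt ((n:ℝ)+1)) := by
          apply mul_le_mul_of_nonneg_left _ (by positivity)
          have h1 := sum_inv_le n
          have h2 := sum_inv_le' n
          linarith
  rw [e_eq ha hb n]
  calc |b * (∑ k ∈ Finset.range (n+1),
        pA a b (n - k) * (1/((n:ℝ)+1) - 1/((k:ℝ)+1))) - (a+b) * pA a b (n+1) / a|
      ≤ b * |∑ k ∈ Finset.range (n+1),
          pA a b (n - k) * (1/((n:ℝ)+1) - 1/((k:ℝ)+1))| + (a+b) * pA a b (n+1) / a := by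
        have hX : 0 < (a+b) * pA a b (n+1) / a := by
          have := hApos (n+1)
          positivity
        refine le_trans (abs_sub _ _) ?_
        rw [abs_mul, abs_of_pos hb, abs_of_pos hX]
    _ ≤ b * (K / ((n:ℝ)+1)^2 * (4 * Real.sqrt ((n:ℝ)+1))) + (a+b)/a * pA a b (n+1) := by
        have := mul_le_mul_of_nonneg_left hsum hb.le
        have heq : (a+b) * pA a b (n+1) / a = (a+b)/a * pA a b (n+1) := by ring
        linarith [heq ▸ le_refl ((a+b) * pA a b (n+1) / a)]
    _ = 4 * b * K * Real.sqrt ((n:ℝ)+1) / ((n:ℝ)+1)^2 + (a+b)/a * pA a b (n+1) := by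
        ring

end Stmt6Aux

namespace Stmt6Aux
variable {a b : ℝ} (ha : 0 < a) (hb : 0 < b)

lemma summable_sqrt_div : Summable (fun m : ℕ => Real.sqrt m / ((m:ℝ))^2) := by
  have h := Real.summable_nat_rpow_inv.mpr (show (1:ℝ) < 3/2 by norm_num)
  refine h.congr fun m => ?_
  rcases Nat.eq_zero_or_pos m with rfl | hm
  · simp
  · have hm' : (0:ℝ) < m := by exact_mod_cast hm
    have key : ((m:ℝ)^((3:ℝ)/2)) = (m:ℝ) * Real.sqrt m := by
      rw [show ((3:ℝ)/2) = 1 + 1/2 by norm_num, Real.rpow_add hm', Real.rpow_one,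
        ← Real.sqrt_eq_rpow]
    rw [key]
    have hs : Real.sqrt (m:ℝ) ≠ 0 := by positivity
    rw [eq_div_iff (by positivity), inv_mul_eq_div, div_eq_iff (by positivity)]
    nlinarith [Real.mul_self_sqrt hm'.le]

include ha hb in
lemma e_zero : e a b 0 = 0 := by
  simp [e, w]

include ha hb in
lemma summable_abs_e : Summable (fun m => |e a b m|) := by
  set K := a * b * Real.exp (2*(a*b)) with hK
  have hg : Summable (fun m : ℕ => 4 * b * K * (Real.sqrt m / ((m:ℝ))^2)
      + (a+b)/a * pA a b m) :=
    (summable_sqrt_div.mul_left _).add ((summable_pA ha hb).mul_left _)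
  refine Summable.of_nonneg_of_le (fun m => abs_nonneg _) (fun m => ?_) hg
  cases m with
  | zero =>
      rw [e_zero ha hb]
      simp only [abs_zero, Nat.cast_zero]
      have := pA_pos ha hb 0
      positivity
  | succ n =>
      have := e_abs_le ha hb n
      rw [← hK] at this
      refine le_trans this ?_
      push_cast
      exact add_le_add (le_of_eq (mul_div_assoc _ _ _)) le_rfl

lemma poch_shift (n : ℕ) :
    (ascPochhammer ℝ n).eval (a+1) * a = (ascPochhammer ℝ n).eval a * (a + n) := by
  induction n with
  | zero => simp
  | succ n ih =>
      rw [ascPochhammer_succ_eval, ascPochhammer_succ_eval]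
      push_cast
      linear_combination (a + 1 + (n:ℝ)) * ih

include ha hb in
lemma coeff_shift (n : ℕ) :
    (ascPochhammer ℝ n).eval (a+1) * (ascPochhammer ℝ n).eval b /
      ((ascPochhammer ℝ n).eval (1+a+b) * (n.factorial : ℝ))
    = pA a b n * ((a + n)/a) := by
  have h1 := poch_pos ha n
  have h2 := poch_pos hb n
  have h3 := poch_pos (show (0:ℝ) < 1 + a + b by linarith) n
  have h4 : (0:ℝ) < n.factorial := by positivity
  have h5 := poch_shift (a := a) n
  rw [pA]
  field_simp
  linear_combination h5

lemma norm_pow_sub_one {z : ℂ} (hz : ‖z‖ ≤ 1) (n : ℕ) : ‖z^n - 1‖ ≤ n * ‖z - 1‖ := by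
  induction n with
  | zero => simp
  | succ n ih =>
      have : z^(n+1) - 1 = z^n * (z - 1) + (z^n - 1) := by ring
      rw [this]
      calc ‖z^n * (z - 1) + (z^n - 1)‖ ≤ ‖z^n * (z-1)‖ + ‖z^n - 1‖ := norm_add_le _ _
        _ ≤ 1 * ‖z - 1‖ + n * ‖z - 1‖ := by
            apply add_le_add _ ih
            rw [norm_mul, norm_pow]
            exact mul_le_mul_of_nonneg_right (pow_le_one₀ (norm_nonneg z) hz) (norm_nonneg _)
        _ = (n + 1 : ℕ) * ‖z - 1‖ := by push_cast; ring

end Stmt6Aux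

set_option maxHeartbeats 2000000 in
open Stmt6Aux in
theorem stmt_6 (a b c : ℝ) (ha : 0 < a) (hb : 0 < b) (hc : c = 1 + a + b) :
    ∃ C > (0 : ℝ), ∃ δ ∈ Set.Ioo (0 : ℝ) 1, ∀ z ∈ Metric.ball (0 : ℂ) 1,
      ‖1 - z‖ < δ →
        hyperF a b c z ≠ 0 ∧
        ‖hyperF (a + 1) b c z / hyperF a b c z +
          (b : ℂ) * Complex.log (1 - z)‖ ≤ C := by
  subst hc
  have hApos := pA_pos ha hb
  have hAsum := summable_pA ha hb
  set S : ℝ := ∑' n, pA a b n with hS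
  have hS1 : 1 ≤ S := by
    have := Summable.le_tsum hAsum 0 (fun j _ => (hApos j).le)
    rwa [pA_zero] at this
  have hEsum := summable_abs_e ha hb
  set E : ℝ := ∑' n, |e a b n| with hE
  have hE0 : 0 ≤ E := tsum_nonneg (fun n => abs_nonneg _)
  set K : ℝ := a * b * Real.exp (2*(a*b)) with hK
  have hKpos : 0 < K := by rw [hK]; positivity
  -- choose N for tail
  obtain ⟨N, hN⟩ : ∃ N, S - ∑ j ∈ Finset.range N, pA a b j < 1/8 := by
    obtain ⟨N, hN⟩ := Metric.tendsto_atTop.mp hAsum.hasSum.tendsto_sum_nat (1/8) (by norm_num)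
    refine ⟨N, ?_⟩
    have := hN N le_rfl
    rw [Real.dist_eq] at this
    have h2 := neg_abs_le (∑ j ∈ Finset.range N, pA a b j - S)
    linarith
  set M : ℝ := ∑ j ∈ Finset.range N, (j:ℝ) * pA a b j with hM
  have hM0 : 0 ≤ M :=
    Finset.sum_nonneg fun j _ => mul_nonneg (Nat.cast_nonneg j) (hApos j).le
  refine ⟨2*(S+E) + 1, by linarith, min (1/2) (1/(8*(M+1))),
    ⟨lt_min (by norm_num) (by positivity), lt_of_le_of_lt (min_le_left _ _) (by norm_num)⟩, ?_⟩
  intro z hzball hzd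
  have hz : ‖z‖ < 1 := mem_ball_zero_iff.mp hzball
  have hz1 : ‖1 - z‖ < 1/(8*(M+1)) := lt_of_lt_of_le hzd (min_le_right _ _)
  have hzn : ∀ n:ℕ, ‖z^n‖ ≤ 1 := fun n => by
    rw [norm_pow]; exact pow_le_one₀ (norm_nonneg z) hz.le
  have hgeo : Summable (fun n : ℕ => ‖z‖^n) :=
    summable_geometric_of_lt_one (norm_nonneg z) hz
  have hFsum : Summable (fun n => ((pA a b n : ℝ):ℂ) * z^n) := by
    refine Summable.of_norm_bounded hAsum (fun n => ?_)
    rw [norm_mul, Complex.norm_real, Real.norm_eq_abs, abs_of_pos (hApos n)]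
    calc pA a b n * ‖z^n‖ ≤ pA a b n * 1 :=
          mul_le_mul_of_nonneg_left (hzn n) (hApos n).le
      _ = pA a b n := mul_one _
  have hFeq : hyperF a b (1+a+b) z = ∑' n, ((pA a b n : ℝ):ℂ) * z^n := rfl
  -- ## lower bound for the denominator
  have hconst : Summable (fun n => ((pA a b n:ℝ):ℂ)) := by
    refine Summable.of_norm_bounded hAsum (fun n => ?_)
    rw [Complex.norm_real, Real.norm_eq_abs, abs_of_pos (hApos n)]
  have hdiff : hyperF a b (1+a+b) z - ((S:ℝ):ℂ) = ∑' n, ((pA a b n:ℝ):ℂ) * (z^n - 1) := by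
    rw [hFeq, hS, Complex.ofReal_tsum, ← Summable.tsum_sub hFsum hconst]
    exact tsum_congr fun n => by ring
  have htermsum : Summable (fun n => pA a b n * ‖z^n - 1‖) := by
    refine Summable.of_nonneg_of_le
      (fun n => mul_nonneg (hApos n).le (norm_nonneg _)) (fun n => ?_) (hAsum.mul_left 2)
    have h2 : ‖z^n - 1‖ ≤ 2 := by
      calc ‖z^n - 1‖ ≤ ‖z^n‖ + ‖(1:ℂ)‖ := norm_sub_le _ _
        _ ≤ 2 := by rw [norm_one]; linarith [hzn n]
    calc pA a b n * ‖z^n - 1‖ ≤ pA a b n * 2 :=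
          mul_le_mul_of_nonneg_left h2 (hApos n).le
      _ = 2 * pA a b n := mul_comm _ _
  have hnormdiff : ‖hyperF a b (1+a+b) z - ((S:ℝ):ℂ)‖ ≤ 3/8 := by
    rw [hdiff]
    have hnn : ∀ n:ℕ, ‖((pA a b n:ℝ):ℂ) * (z^n - 1)‖ = pA a b n * ‖z^n - 1‖ := fun n => by
      rw [norm_mul, Complex.norm_real, Real.norm_eq_abs, abs_of_pos (hApos n)]
    calc ‖∑' n, ((pA a b n:ℝ):ℂ) * (z^n - 1)‖
        ≤ ∑' n, ‖((pA a b n:ℝ):ℂ) * (z^n - 1)‖ := by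
          apply norm_tsum_le_tsum_norm
          exact htermsum.congr fun n => (hnn n).symm
      _ = ∑' n, pA a b n * ‖z^n - 1‖ := tsum_congr hnn
      _ = (∑ j ∈ Finset.range N, pA a b j * ‖z^j - 1‖)
            + ∑' k, pA a b (k + N) * ‖z^(k+N) - 1‖ :=
          (Summable.sum_add_tsum_nat_add N htermsum).symm
      _ ≤ 1/8 + 2/8 := by
          have hp1 : (∑ j ∈ Finset.range N, pA a b j * ‖z^j - 1‖) ≤ 1/8 := by
            have hle : ∀ j ∈ Finset.range N, pA a b j * ‖z^j - 1‖
                ≤ ((j:ℝ) * pA a b j) * ‖z - 1‖ := by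
              intro j _
              have := norm_pow_sub_one hz.le j
              calc pA a b j * ‖z^j - 1‖ ≤ pA a b j * ((j:ℝ) * ‖z - 1‖) :=
                    mul_le_mul_of_nonneg_left this (hApos j).le
                _ = ((j:ℝ) * pA a b j) * ‖z - 1‖ := by ring
            calc (∑ j ∈ Finset.range N, pA a b j * ‖z^j - 1‖)
                ≤ ∑ j ∈ Finset.range N, ((j:ℝ) * pA a b j) * ‖z - 1‖ :=
                  Finset.sum_le_sum hle
              _ = M * ‖z - 1‖ := by rw [← Finset.sum_mul]
              _ ≤ M * (1/(8*(M+1))) := by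
                  apply mul_le_mul_of_nonneg_left _ hM0
                  rw [norm_sub_rev] at hz1
                  exact hz1.le
              _ ≤ 1/8 := by
                  rw [mul_one_div, div_le_div_iff₀ (by positivity) (by norm_num)]
                  nlinarith
          have hp2 : ∑' k, pA a b (k + N) * ‖z^(k+N) - 1‖ ≤ 2/8 := by
            have htail : Summable (fun k => pA a b (k + N) * ‖z^(k+N) - 1‖) :=
              (summable_nat_add_iff N).mpr htermsum
            have htail2 : Summable (fun k => 2 * pA a b (k + N)) :=
              ((summable_nat_add_iff N).mpr hAsum).mul_left 2
            calc ∑' k, pA a b (k + N) * ‖z^(k+N) - 1‖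
                ≤ ∑' k, 2 * pA a b (k + N) := by
                  apply Summable.tsum_le_tsum _ htail htail2
                  intro k
                  have h2 : ‖z^(k+N) - 1‖ ≤ 2 := by
                    calc ‖z^(k+N) - 1‖ ≤ ‖z^(k+N)‖ + ‖(1:ℂ)‖ := norm_sub_le _ _
                      _ ≤ 2 := by rw [norm_one]; linarith [hzn (k+N)]
                  calc pA a b (k+N) * ‖z^(k+N) - 1‖ ≤ pA a b (k+N) * 2 :=
                        mul_le_mul_of_nonneg_left h2 (hApos _).le
                    _ = 2 * pA a b (k+N) := mul_comm _ _
              _ = 2 * ∑' k, pA a b (k + N) := tsum_mul_left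
              _ ≤ 2/8 := by
                  have : ∑' k, pA a b (k + N) = S - ∑ j ∈ Finset.range N, pA a b j := by
                    have := Summable.sum_add_tsum_nat_add N hAsum
                    linarith [this]
                  rw [this]
                  linarith
          linarith
      _ = 3/8 := by norm_num
  have hFlow : (1/2:ℝ) ≤ ‖hyperF a b (1+a+b) z‖ := by
    have h1 : ‖((S:ℝ):ℂ)‖ - ‖hyperF a b (1+a+b) z‖
        ≤ ‖((S:ℝ):ℂ) - hyperF a b (1+a+b) z‖ := norm_sub_norm_le _ _
    rw [norm_sub_rev] at h1
    rw [Complex.norm_real, Real.norm_eq_abs, abs_of_pos (by linarith)] at h1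
    linarith
  have hFne : hyperF a b (1+a+b) z ≠ 0 := by
    intro h
    rw [h, norm_zero] at hFlow
    linarith
  refine ⟨hFne, ?_⟩
  -- ## numerator identity
  have hF1eq : hyperF (a+1) b (1+a+b) z
      = ∑' n, ((pA a b n * ((a+(n:ℝ))/a) : ℝ):ℂ) * z^n := by
    unfold hyperF
    exact tsum_congr fun n => by rw [coeff_shift ha hb n]
  have hlnorm : Summable (fun n : ℕ => ‖z^n/(n:ℂ)‖) := by
    refine Summable.of_nonneg_of_le (fun n => norm_nonneg _) (fun n => ?_) hgeo
    rw [norm_div, norm_pow]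
    rcases Nat.eq_zero_or_pos n with rfl | hn
    · simp
    · have h1 : (1:ℝ) ≤ ‖(n:ℂ)‖ := by
        rw [Complex.norm_natCast]
        exact_mod_cast hn
      exact div_le_self (by positivity) h1
  have hFnorm : Summable (fun n => ‖((pA a b n : ℝ):ℂ) * z^n‖) := by
    refine Summable.of_nonneg_of_le (fun n => norm_nonneg _) (fun n => ?_) hAsum
    rw [norm_mul, Complex.norm_real, Real.norm_eq_abs, abs_of_pos (hApos n)]
    calc pA a b n * ‖z^n‖ ≤ pA a b n * 1 :=
          mul_le_mul_of_nonneg_left (hzn n) (hApos n).le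
      _ = pA a b n := mul_one _
  have hWle : ∀ n, w a b n ≤ S := by
    intro n
    have h1 : ∀ k ∈ Finset.range (n+1), pA a b (n - k) / (k:ℝ) ≤ pA a b (n - k) := by
      intro k _
      rcases Nat.eq_zero_or_pos k with rfl | hk
      · simp [(hApos _).le]
      · exact div_le_self (hApos _).le (by exact_mod_cast hk)
    calc w a b n ≤ ∑ k ∈ Finset.range (n+1), pA a b (n - k) := Finset.sum_le_sum h1
      _ = ∑ j ∈ Finset.range (n+1), pA a b j := sum_reflect_pA ha hb n
      _ ≤ S := Summable.sum_le_tsum _ (fun j _ => (hApos j).le) hAsum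
  have hWnonneg : ∀ n, 0 ≤ w a b n := by
    intro n
    apply Finset.sum_nonneg
    intro k _
    exact div_nonneg (hApos _).le (Nat.cast_nonneg k)
  have hWsum : Summable (fun n => ((w a b n:ℝ):ℂ) * z^n) := by
    refine Summable.of_norm_bounded (hgeo.mul_left S) (fun n => ?_)
    rw [norm_mul, norm_pow, Complex.norm_real, Real.norm_eq_abs, _root_.abs_of_nonneg (hWnonneg n)]
    exact mul_le_mul (hWle n) le_rfl (by positivity) (by linarith)
  have hlogF : (-Complex.log (1-z)) * hyperF a b (1+a+b) z
      = ∑' n, ((w a b n:ℝ):ℂ) * z^n := by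
    rw [hFeq, ← (hasSum_taylorSeries_neg_log hz).tsum_eq,
      tsum_mul_tsum_eq_tsum_sum_antidiagonal_of_summable_norm hlnorm hFnorm]
    refine tsum_congr fun n => ?_
    rw [Finset.Nat.sum_antidiagonal_eq_sum_range_succ_mk]
    have hwc : ((w a b n : ℝ):ℂ) = ∑ k ∈ Finset.range (n+1), ((pA a b (n-k):ℝ):ℂ)/(k:ℂ) := by
      rw [w]
      push_cast
      rfl
    rw [hwc, Finset.sum_mul]
    refine Finset.sum_congr rfl fun k hk => ?_
    have hk' : k ≤ n := Nat.lt_succ_iff.mp (Finset.mem_range.mp hk)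
    have hzz : z^k * z^(n-k) = z^n := by
      rw [← pow_add]
      congr 1
      omega
    calc z^k/(k:ℂ) * (((pA a b (n-k):ℝ):ℂ) * z^(n-k))
        = ((pA a b (n-k):ℝ):ℂ)/(k:ℂ) * (z^k * z^(n-k)) := by ring
      _ = ((pA a b (n-k):ℝ):ℂ)/(k:ℂ) * z^n := by rw [hzz]
  have hQsum : Summable (fun n : ℕ => ((((n:ℝ)) * pA a b n / a :ℝ):ℂ) * z^n) := by
    refine Summable.of_norm_bounded (hgeo.mul_left (K/a)) (fun n => ?_)
    rw [norm_mul, norm_pow, Complex.norm_real, Real.norm_eq_abs,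
      _root_.abs_of_nonneg (div_nonneg (mul_nonneg (Nat.cast_nonneg n) (hApos n).le) ha.le)]
    have hnum_le : (n:ℝ) * pA a b n ≤ K := by
      cases n with
      | zero => simpa using hKpos.le
      | succ m =>
          have h1 := pA_le ha hb m
          rw [← hK] at h1
          have hm1 : (0:ℝ) < (m:ℝ)+1 := by positivity
          have h2 : ((m:ℝ)+1) * pA a b (m+1) ≤ ((m:ℝ)+1) * (K/((m:ℝ)+1)^2) :=
            mul_le_mul_of_nonneg_left h1 hm1.le
          have h3 : ((m:ℝ)+1) * (K/((m:ℝ)+1)^2) = K/((m:ℝ)+1) := by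
            field_simp
          have h4 : K/((m:ℝ)+1) ≤ K := by
            apply div_le_self hKpos.le
            linarith
          push_cast
          nlinarith
    have hqle : (n:ℝ) * pA a b n / a ≤ K/a := by
      gcongr
    exact mul_le_mul hqle le_rfl (by positivity) (by positivity)
  have hF1sum : Summable (fun n => ((pA a b n * ((a+(n:ℝ))/a) : ℝ):ℂ) * z^n) := by
    refine Summable.congr (hFsum.add hQsum) (fun n => ?_)
    have hre : pA a b n + (n:ℝ) * pA a b n / a = pA a b n * ((a+(n:ℝ))/a) := by
      field_simp
    calc ((pA a b n:ℝ):ℂ) * z^n + ((((n:ℝ)) * pA a b n / a :ℝ):ℂ) * z^n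
        = ((pA a b n + (n:ℝ) * pA a b n / a : ℝ):ℂ) * z^n := by push_cast; ring
      _ = ((pA a b n * ((a+(n:ℝ))/a) : ℝ):ℂ) * z^n := by rw [hre]
  have hco : ∀ n:ℕ, pA a b n * ((a+(n:ℝ))/a) - b * w a b n = pA a b n + e a b n := by
    intro n
    rw [e]
    field_simp
    ring
  have hnum : hyperF (a+1) b (1+a+b) z + (b:ℂ) * Complex.log (1-z) * hyperF a b (1+a+b) z
      = ∑' n, ((pA a b n + e a b n : ℝ):ℂ) * z^n := by
    have h1 : (b:ℂ) * Complex.log (1-z) * hyperF a b (1+a+b) z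
        = -((b:ℂ) * ∑' n, ((w a b n:ℝ):ℂ) * z^n) := by
      rw [← hlogF]
      ring
    rw [hF1eq, h1, ← sub_eq_add_neg, ← tsum_mul_left,
      ← Summable.tsum_sub hF1sum (hWsum.mul_left _)]
    refine tsum_congr fun n => ?_
    calc ((pA a b n * ((a+(n:ℝ))/a) : ℝ):ℂ) * z^n - (b:ℂ) * (((w a b n:ℝ):ℂ) * z^n)
        = ((pA a b n * ((a+(n:ℝ))/a) - b * w a b n : ℝ):ℂ) * z^n := by push_cast; ring
      _ = ((pA a b n + e a b n : ℝ):ℂ) * z^n := by rw [hco n]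
  -- ## final bound
  have hcomb : Summable (fun n => pA a b n + |e a b n|) := hAsum.add hEsum
  have hnormsumm : Summable (fun n => ‖((pA a b n + e a b n : ℝ):ℂ) * z^n‖) := by
    refine Summable.of_nonneg_of_le (fun n => norm_nonneg _) (fun n => ?_) hcomb
    rw [norm_mul, Complex.norm_real, Real.norm_eq_abs]
    calc |pA a b n + e a b n| * ‖z^n‖ ≤ |pA a b n + e a b n| * 1 :=
          mul_le_mul_of_nonneg_left (hzn n) (abs_nonneg _)
      _ = |pA a b n + e a b n| := mul_one _
      _ ≤ |pA a b n| + |e a b n| := abs_add_le _ _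
      _ = pA a b n + |e a b n| := by rw [abs_of_pos (hApos n)]
  have hbound : ‖∑' n, ((pA a b n + e a b n : ℝ):ℂ) * z^n‖ ≤ S + E := by
    calc ‖∑' n, ((pA a b n + e a b n : ℝ):ℂ) * z^n‖
        ≤ ∑' n, ‖((pA a b n + e a b n : ℝ):ℂ) * z^n‖ := norm_tsum_le_tsum_norm hnormsumm
      _ ≤ ∑' n, (pA a b n + |e a b n|) := by
          apply Summable.tsum_le_tsum _ hnormsumm hcomb
          intro n
          rw [norm_mul, Complex.norm_real, Real.norm_eq_abs]
          calc |pA a b n + e a b n| * ‖z^n‖ ≤ |pA a b n + e a b n| * 1 :=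
                mul_le_mul_of_nonneg_left (hzn n) (abs_nonneg _)
            _ = |pA a b n + e a b n| := mul_one _
            _ ≤ |pA a b n| + |e a b n| := abs_add_le _ _
            _ = pA a b n + |e a b n| := by rw [abs_of_pos (hApos n)]
      _ = S + E := by rw [Summable.tsum_add hAsum hEsum]
  have hrw : hyperF (a+1) b (1+a+b) z / hyperF a b (1+a+b) z + (b:ℂ)*Complex.log (1-z)
      = (hyperF (a+1) b (1+a+b) z + (b:ℂ)*Complex.log (1-z)*hyperF a b (1+a+b) z)
        / hyperF a b (1+a+b) z := by
    field_simp
  rw [hrw, hnum, norm_div]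
  calc ‖∑' n, ((pA a b n + e a b n : ℝ):ℂ) * z^n‖ / ‖hyperF a b (1+a+b) z‖
      ≤ (S+E)/(1/2) := by
        apply div_le_div₀ (by linarith) hbound (by norm_num) hFlow
    _ = 2*(S+E) := by ring
    _ ≤ 2*(S+E) + 1 := by linarith
end

section
/- Let a, b, c be real constants satisfying 1 < a ≤ b ≤ 4, c > 2 and b ≤ c ≤ 2b ≤ 2(1+a). Set τ = (a−1)b/c, p = c − 2 + (1−a)(1−b) and Q(t) = τ(1−a)(1−b) + p(t² − τt). Then S(t) = (p − τ(c−2))·Q(t) − (τ(c−2) − pt)² satisfies S(t) ≥ 0 for every t ∈ [0,1]. -/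
theorem stmt_12 (a b c : ℝ) (ha : 1 < a) (hab : a ≤ b) (hb4 : b ≤ 4) (hc2 : 2 < c)
    (hbc : b ≤ c) (hc2b : c ≤ 2 * b) (hba : 2 * b ≤ 2 * (1 + a))
    (τ p : ℝ) (hτ : τ = (a - 1) * b / c) (hp : p = c - 2 + (1 - a) * (1 - b)) :
    ∀ t ∈ Set.Icc (0 : ℝ) 1,
      0 ≤ (p - τ * (c - 2)) * (τ * (1 - a) * (1 - b) + p * (t ^ 2 - τ * t)) -
        (τ * (c - 2) - p * t) ^ 2 := by
  rintro t ⟨ht0, ht1⟩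
  have hc0 : (0:ℝ) < c := by linarith
  have hcne : c ≠ 0 := ne_of_gt hc0
  have hτpos : 0 ≤ τ := by
    rw [hτ]
    apply div_nonneg _ (le_of_lt hc0)
    nlinarith
  have hppos : 0 ≤ p := by nlinarith
  -- S(0) ≥ 0
  have hS0 : 0 ≤ (p - τ * (c - 2)) * (τ * (1 - a) * (1 - b)) - (τ * (c - 2)) ^ 2 := by
    have e : (p - τ * (c - 2)) * (τ * (1 - a) * (1 - b)) - (τ * (c - 2)) ^ 2
        = ((a - 1) ^ 2 * b * (c - 2 + (1 - a) * (1 - b)) * (2 * (b - 1) - (c - 2))) / c ^ 2 := by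
      subst hp hτ
      field_simp
      ring
    rw [e]
    apply div_nonneg _ (by positivity)
    have h1 : 0 ≤ (a - 1) ^ 2 * b := by nlinarith
    have h2 : 0 ≤ 2 * (b - 1) - (c - 2) := by linarith
    have hp' : 0 ≤ c - 2 + (1 - a) * (1 - b) := hp ▸ hppos
    exact mul_nonneg (mul_nonneg h1 hp') h2
  -- S(1) = 0
  have hS1 : (p - τ * (c - 2)) * (τ * (1 - a) * (1 - b) + p * (1 ^ 2 - τ * 1)) -
        (τ * (c - 2) - p * 1) ^ 2 = 0 := by
    subst hp; ring
  -- concavity decomposition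
  have hdecomp : (p - τ * (c - 2)) * (τ * (1 - a) * (1 - b) + p * (t ^ 2 - τ * t)) -
        (τ * (c - 2) - p * t) ^ 2
      = (1 - t) * ((p - τ * (c - 2)) * (τ * (1 - a) * (1 - b)) - (τ * (c - 2)) ^ 2)
        + t * ((p - τ * (c - 2)) * (τ * (1 - a) * (1 - b) + p * (1 ^ 2 - τ * 1)) -
            (τ * (c - 2) - p * 1) ^ 2)
        + p * τ * (c - 2) * t * (1 - t) := by ring
  rw [hdecomp, hS1]
  have h3 : 0 ≤ p * τ * (c - 2) * t * (1 - t) := by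
    apply mul_nonneg; apply mul_nonneg; apply mul_nonneg; apply mul_nonneg
    all_goals linarith
  nlinarith [mul_nonneg (by linarith : (0:ℝ) ≤ 1 - t) hS0]
end

section
/- Let a, b, c be real constants with a > 0, b > 0 and 1 + a < c ≤ 1 + a + b. Then F(a+1,b;c;x)/F(a,b;c;x) tends to +∞ as the real variable x tends to 1 from the left (x ∈ (0,1)). -/
open Complex Filter MeasureTheory Metric Set
/-- Real-valued Gaussian hypergeometric function for real arguments in (-1,1). -/
noncomputable def hyperFR (a b c x : ℝ) : ℝ :=
  ∑' n : ℕ, ((ascPochhammer ℝ n).eval a * (ascPochhammer ℝ n).eval b /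
      ((ascPochhammer ℝ n).eval c * (n.factorial : ℝ))) * x ^ n

/-- Coefficient of the hypergeometric series. -/
noncomputable def Bco (a b c : ℝ) (n : ℕ) : ℝ :=
  (ascPochhammer ℝ n).eval a * (ascPochhammer ℝ n).eval b /
      ((ascPochhammer ℝ n).eval c * (n.factorial : ℝ))

lemma Bpos {a b c : ℝ} (ha : 0 < a) (hb : 0 < b) (hc : 0 < c) (n : ℕ) :
    0 < Bco a b c n := by
  have h1 := ascPochhammer_pos n a ha
  have h2 := ascPochhammer_pos n b hb
  have h3 := ascPochhammer_pos n c hc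
  have h4 : (0:ℝ) < n.factorial := by exact_mod_cast n.factorial_pos
  unfold Bco; positivity

lemma Bzero (a b c : ℝ) : Bco a b c 0 = 1 := by simp [Bco]

lemma Bsucc {a b c : ℝ} (ha : 0 < a) (hb : 0 < b) (hc : 0 < c) (n : ℕ) :
    Bco a b c (n+1) = Bco a b c n * ((a+n)*(b+n)/((c+n)*(n+1))) := by
  have h1 := ascPochhammer_pos n a ha
  have h2 := ascPochhammer_pos n b hb
  have h3 := ascPochhammer_pos n c hc
  have h4 : (0:ℝ) < n.factorial := by exact_mod_cast n.factorial_pos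
  have h5 : (0:ℝ) < c + n := by positivity
  have h6 : (0:ℝ) < (n:ℝ) + 1 := by positivity
  unfold Bco
  rw [ascPochhammer_succ_eval, ascPochhammer_succ_eval, ascPochhammer_succ_eval,
    Nat.factorial_succ]
  push_cast
  field_simp

lemma Arel {a b c : ℝ} (ha : 0 < a) (n : ℕ) :
    Bco (a+1) b c n = (a+n)/a * Bco a b c n := by
  have key : a * (ascPochhammer ℝ n).eval (a+1) = (ascPochhammer ℝ n).eval a * (a+n) := by
    have h1 : (ascPochhammer ℝ (n+1)).eval a = a * (ascPochhammer ℝ n).eval (a+1) := by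
      rw [ascPochhammer_succ_left]
      simp [Polynomial.eval_comp]
    rw [← h1, ascPochhammer_succ_eval]
  have e : (ascPochhammer ℝ n).eval (a+1) = (ascPochhammer ℝ n).eval a * (a+n) / a := by
    field_simp
    linarith [key]
  unfold Bco
  rw [e]
  ring

lemma aux_div {a c : ℝ} (hc : 0 < c) :
    Tendsto (fun n : ℕ => (a + n) / (c + n)) atTop (nhds 1) := by
  have h0 : Tendsto (fun n : ℕ => (a - c) / (c + n)) atTop (nhds 0) := by
    apply Tendsto.div_atTop (tendsto_const_nhds)
    exact tendsto_atTop_add_const_left _ c tendsto_natCast_atTop_atTop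
  have := h0.const_add 1
  rw [add_zero] at this
  apply this.congr
  intro n
  have hcn : (0:ℝ) < c + n := by positivity
  field_simp
  ring

lemma ratio_tendsto {a b c : ℝ} (hc : 0 < c) :
    Tendsto (fun n : ℕ => (a+n)*(b+n)/((c+n)*(n+1))) atTop (nhds 1) := by
  have h1 := aux_div (a := a) hc
  have h2 := aux_div (a := b) (c := 1) one_pos
  have := h1.mul h2
  rw [mul_one] at this
  apply this.congr
  intro n
  rw [div_mul_div_comm]
  ring_nf

lemma summB {a b c x : ℝ} (ha : 0 < a) (hb : 0 < b) (hc : 0 < c) (hx : x ∈ Ioo (0:ℝ) 1) :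
    Summable (fun n => Bco a b c n * x ^ n) := by
  obtain ⟨hx0, hx1⟩ := hx
  apply summable_of_ratio_test_tendsto_lt_one (l := x) hx1
  · filter_upwards with n
    have := Bpos ha hb hc n
    positivity
  · have : (fun n : ℕ => ‖Bco a b c (n+1) * x ^ (n+1)‖ / ‖Bco a b c n * x ^ n‖)
        = fun n : ℕ => ((a+n)*(b+n)/((c+n)*(n+1))) * x := by
      funext n
      have hB := Bpos ha hb hc n
      have hB' := Bpos ha hb hc (n+1)
      have h1 : (0:ℝ) < Bco a b c n * x ^ n := by positivity
      have h2 : (0:ℝ) < Bco a b c (n+1) * x ^ (n+1) := by positivity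
      rw [Real.norm_eq_abs, Real.norm_eq_abs, abs_of_pos h1, abs_of_pos h2,
        Bsucc ha hb hc n, pow_succ]
      field_simp
    rw [this]
    have := (ratio_tendsto (a:=a) (b:=b) hc).mul_const x
    rwa [one_mul] at this

lemma B_lb {a b c : ℝ} (ha : 0 < a) (hb : 0 < b) (hc1 : 1 ≤ c) (hcb : c ≤ 1 + a + b) :
    ∀ n : ℕ, 1 ≤ n → Bco a b c 1 ≤ (n:ℝ)^2 * Bco a b c n := by
  have hc : 0 < c := lt_of_lt_of_le one_pos hc1
  intro n hn
  induction n, hn using Nat.le_induction with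
  | base => simp
  | succ n hn ih =>
    have hB := Bpos ha hb hc n
    have hn1 : (1:ℝ) ≤ (n:ℝ) := by exact_mod_cast hn
    have hden : (0:ℝ) < (c+n)*(n+1) := by positivity
    have key : ((n:ℝ))^2 * Bco a b c n ≤ ((n:ℝ)+1)^2 * Bco a b c (n+1) := by
      rw [Bsucc ha hb hc n,
        show ((n:ℝ)+1)^2 * (Bco a b c n * ((a+n)*(b+n)/((c+n)*(n+1))))
          = ((n:ℝ)+1)^2 * Bco a b c n * ((a+n)*(b+n)) / ((c+n)*(n+1)) from by ring,
        le_div_iff₀ hden]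
      have hn0 : (0:ℝ) ≤ (n:ℝ) := by positivity
      nlinarith [mul_pos ha hb, mul_pos (mul_pos ha hb) hB,
        mul_nonneg (mul_nonneg (mul_nonneg hn0 hn0) hB.le)
          (sub_nonneg.2 (by linarith : c ≤ a + b + 1)),
        mul_nonneg (mul_nonneg hn0 hB.le) (sub_nonneg.2 (by linarith : c ≤ a + b + 1)),
        mul_nonneg hn0 (mul_pos (mul_pos ha hb) hB).le,
        mul_nonneg (mul_nonneg hn0 hn0) (mul_pos (add_pos ha hb) hB).le]
    push_cast
    exact ih.trans key

lemma notSummableA {a b c : ℝ} (ha : 0 < a) (hb : 0 < b) (hc1 : 1 ≤ c)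
    (hcb : c ≤ 1 + a + b) : ¬ Summable (fun n : ℕ => Bco (a+1) b c n) := by
  have hc : 0 < c := lt_of_lt_of_le one_pos hc1
  intro h
  have hB1 : 0 < Bco a b c 1 := Bpos ha hb hc 1
  have hle : ∀ n : ℕ, Bco a b c 1 / a * (1/(n:ℝ)) ≤ Bco (a+1) b c n := by
    intro n
    rcases Nat.eq_zero_or_pos n with rfl | hn
    · simp
      exact (Bpos (by linarith) hb hc 0).le
    · have hn1 : (1:ℝ) ≤ (n:ℝ) := by exact_mod_cast hn
      have hBn := Bpos ha hb hc n
      have hlb := B_lb ha hb hc1 hcb n hn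
      rw [Arel ha n]
      have e : Bco a b c 1 / a * (1/(n:ℝ)) = (n:ℝ)/a * (Bco a b c 1/(n:ℝ)^2) := by
        field_simp
      rw [e]
      have h1 : Bco a b c 1/(n:ℝ)^2 ≤ Bco a b c n := by
        rw [div_le_iff₀ (by positivity)]
        linarith [hlb]
      calc (n:ℝ)/a * (Bco a b c 1/(n:ℝ)^2) ≤ (n:ℝ)/a * Bco a b c n := by
            apply mul_le_mul_of_nonneg_left h1 (by positivity)
        _ ≤ (a+n)/a * Bco a b c n := by
            apply mul_le_mul_of_nonneg_right _ hBn.le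
            gcongr
            linarith
  have hs : Summable (fun n : ℕ => Bco a b c 1 / a * (1/(n:ℝ))) := by
    apply Summable.of_nonneg_of_le _ hle h
    intro n
    positivity
  rw [summable_mul_left_iff (by positivity : Bco a b c 1 / a ≠ 0)] at hs
  exact Real.not_summable_one_div_natCast hs

lemma poly_event {g : ℕ → ℝ} {N : ℕ} {K : ℝ} (h : K < ∑ n ∈ Finset.range N, g n) :
    ∀ᶠ x in nhdsWithin (1:ℝ) (Ioo 0 1), K < ∑ n ∈ Finset.range N, g n * x^n := by
  have hcont : Continuous (fun x : ℝ => ∑ n ∈ Finset.range N, g n * x^n) := by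
    apply continuous_finset_sum
    intro i _
    exact (continuous_const.mul (continuous_pow i))
  have ht : Tendsto (fun x : ℝ => ∑ n ∈ Finset.range N, g n * x^n)
      (nhdsWithin (1:ℝ) (Ioo 0 1)) (nhds (∑ n ∈ Finset.range N, g n * 1^n)) :=
    (hcont.continuousAt).continuousWithinAt
  simp only [one_pow, mul_one] at ht
  exact ht.eventually_const_lt h

lemma hyperFR_eq (a b c x : ℝ) :
    hyperFR a b c x = ∑' n : ℕ, Bco a b c n * x ^ n := rfl

theorem stmt_16 (a b c : ℝ) (ha : 0 < a) (hb : 0 < b) (hac : 1 + a < c)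
    (hcab : c ≤ 1 + a + b) :
    Tendsto (fun x : ℝ => hyperFR (a + 1) b c x / hyperFR a b c x)
      (nhdsWithin 1 (Set.Ioo 0 1)) atTop := by
  have hc : (0:ℝ) < c := by linarith
  have hc1 : (1:ℝ) ≤ c := by linarith
  have ha1 : (0:ℝ) < a + 1 := by linarith
  have hA_nonneg : ∀ n : ℕ, 0 ≤ Bco (a+1) b c n := fun n => (Bpos ha1 hb hc n).le
  have hB_nonneg : ∀ n : ℕ, 0 ≤ Bco a b c n := fun n => (Bpos ha hb hc n).le
  rw [Filter.tendsto_atTop]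
  intro M
  set M' := max M 1 with hM'def
  have hM1 : (1:ℝ) ≤ M' := le_max_right M 1
  have hM0 : (0:ℝ) < M' := by linarith
  suffices h : ∀ᶠ x in nhdsWithin (1:ℝ) (Ioo 0 1),
      M' ≤ hyperFR (a+1) b c x / hyperFR a b c x by
    filter_upwards [h] with x hx
    exact (le_max_left M 1).trans hx
  by_cases hsum : Summable (fun n : ℕ => Bco a b c n)
  · -- denominator bounded
    set L := ∑' n : ℕ, Bco a b c n with hL
    have hL1 : (1:ℝ) ≤ L := by
      have := Summable.le_tsum hsum 0 (fun j _ => hB_nonneg j)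
      rwa [Bzero] at this
    have hTend : Tendsto (fun N => ∑ n ∈ Finset.range N, Bco (a+1) b c n) atTop atTop :=
      (not_summable_iff_tendsto_nat_atTop_of_nonneg hA_nonneg).1 (notSummableA ha hb hc1 hcab)
    obtain ⟨N, hN⟩ := (tendsto_atTop.1 hTend (M'*L+1)).exists
    have hev := poly_event (g := fun n => Bco (a+1) b c n) (N := N) (K := M'*L) (by linarith)
    filter_upwards [hev, eventually_mem_nhdsWithin] with x hx1 hx2
    obtain ⟨hx0, hxlt⟩ := hx2
    have hx2 : x ∈ Ioo (0:ℝ) 1 := ⟨hx0, hxlt⟩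
    have hsB := summB ha hb hc hx2
    have hsA := summB ha1 hb hc hx2
    have hF1 : (1:ℝ) ≤ hyperFR a b c x := by
      have := Summable.le_tsum hsB 0 (fun j _ => by
        have := Bpos ha hb hc j
        positivity)
      rw [hyperFR_eq]
      simpa [Bzero] using this
    have hFpos : 0 < hyperFR a b c x := by linarith
    have hFleL : hyperFR a b c x ≤ L := by
      rw [hyperFR_eq]
      apply Summable.tsum_le_tsum _ hsB hsum
      intro n
      calc Bco a b c n * x^n ≤ Bco a b c n * 1 := by
            apply mul_le_mul_of_nonneg_left _ (hB_nonneg n)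
            exact pow_le_one₀ hx0.le hxlt.le
        _ = _ := mul_one _
    have hHgt : M' * L < hyperFR (a+1) b c x := by
      refine lt_of_lt_of_le hx1 ?_
      rw [hyperFR_eq]
      exact Summable.sum_le_tsum (Finset.range N) (fun n _ => by
        have := Bpos ha1 hb hc n
        positivity) hsA
    rw [le_div_iff₀ hFpos]
    calc M' * hyperFR a b c x ≤ M' * L := mul_le_mul_of_nonneg_left hFleL hM0.le
      _ ≤ hyperFR (a+1) b c x := hHgt.le
  · -- denominator tends to infinity
    have hFbig : ∀ K : ℝ, ∀ᶠ x in nhdsWithin (1:ℝ) (Ioo 0 1), K ≤ hyperFR a b c x := by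
      intro K
      have hTend : Tendsto (fun N => ∑ n ∈ Finset.range N, Bco a b c n) atTop atTop :=
        (not_summable_iff_tendsto_nat_atTop_of_nonneg hB_nonneg).1 hsum
      obtain ⟨N, hN⟩ := (tendsto_atTop.1 hTend (K+1)).exists
      have hev := poly_event (g := fun n => Bco a b c n) (N := N) (K := K) (by linarith)
      filter_upwards [hev, eventually_mem_nhdsWithin] with x hx1 hx2
      refine le_trans hx1.le ?_
      rw [hyperFR_eq]
      exact Summable.sum_le_tsum (Finset.range N) (fun n _ => by
        obtain ⟨h0, h1⟩ := hx2
        have := Bpos ha hb hc n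
        positivity) (summB ha hb hc hx2)
    set N := ⌈2 * M' * a⌉₊ with hNdef
    have hNge : 2 * M' * a ≤ (N:ℝ) := Nat.le_ceil _
    set C := ∑ n ∈ Finset.range N, Bco a b c n with hC
    have hC0 : 0 ≤ C := Finset.sum_nonneg fun n _ => hB_nonneg n
    filter_upwards [hFbig (2*C+1), eventually_mem_nhdsWithin] with x hFx hx2
    obtain ⟨hx0, hxlt⟩ := hx2
    have hx2 : x ∈ Ioo (0:ℝ) 1 := ⟨hx0, hxlt⟩
    have hsB := summB ha hb hc hx2
    have hsA := summB ha1 hb hc hx2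
    have hFpos : 0 < hyperFR a b c x := by linarith
    have hsplit : ∑ n ∈ Finset.range N, Bco a b c n * x^n
        + ∑' k : ℕ, Bco a b c (k+N) * x^(k+N) = hyperFR a b c x := by
      rw [hyperFR_eq]
      exact Summable.sum_add_tsum_nat_add N hsB
    have hPle : ∑ n ∈ Finset.range N, Bco a b c n * x^n ≤ C := by
      apply Finset.sum_le_sum
      intro n _
      calc Bco a b c n * x^n ≤ Bco a b c n * 1 := by
            apply mul_le_mul_of_nonneg_left _ (hB_nonneg n)
            exact pow_le_one₀ hx0.le hxlt.le
        _ = _ := mul_one _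
    have hsBtail : Summable (fun k : ℕ => Bco a b c (k+N) * x^(k+N)) :=
      (summable_nat_add_iff (f := fun n : ℕ => Bco a b c n * x^n) N).2 hsB
    have hsAtail : Summable (fun k : ℕ => Bco (a+1) b c (k+N) * x^(k+N)) :=
      (summable_nat_add_iff (f := fun n : ℕ => Bco (a+1) b c n * x^n) N).2 hsA
    have htail_le : (N:ℝ)/a * ∑' k : ℕ, Bco a b c (k+N) * x^(k+N)
        ≤ ∑' k : ℕ, Bco (a+1) b c (k+N) * x^(k+N) := by
      rw [← tsum_mul_left]
      apply Summable.tsum_le_tsum _ (hsBtail.mul_left _) hsAtail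
      intro k
      rw [Arel ha (k+N)]
      have hkN : ((k+N:ℕ):ℝ) = (k:ℝ) + (N:ℝ) := by push_cast; ring
      have hfrac : (N:ℝ)/a ≤ (a+((k+N:ℕ):ℝ))/a := by
        rw [hkN]
        gcongr
        have : (0:ℝ) ≤ (k:ℝ) := by positivity
        linarith
      have hterm : (0:ℝ) ≤ Bco a b c (k+N) * x^(k+N) := by
        have := Bpos ha hb hc (k+N)
        positivity
      calc (N:ℝ)/a * (Bco a b c (k+N) * x^(k+N))
          ≤ (a+((k+N:ℕ):ℝ))/a * (Bco a b c (k+N) * x^(k+N)) :=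
            mul_le_mul_of_nonneg_right hfrac hterm
        _ = (a+((k+N:ℕ):ℝ))/a * Bco a b c (k+N) * x^(k+N) := by ring
    have hHge : (N:ℝ)/a * (hyperFR a b c x - C) ≤ hyperFR (a+1) b c x := by
      have h1 : ∑' k : ℕ, Bco (a+1) b c (k+N) * x^(k+N) ≤ hyperFR (a+1) b c x := by
        rw [hyperFR_eq, ← Summable.sum_add_tsum_nat_add N hsA]
        have h0 : 0 ≤ ∑ n ∈ Finset.range N, Bco (a+1) b c n * x^n := by
          apply Finset.sum_nonneg
          intro n _
          have := Bpos ha1 hb hc n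
          positivity
        linarith
      have h2 : (N:ℝ)/a * (hyperFR a b c x - C)
          ≤ (N:ℝ)/a * ∑' k : ℕ, Bco a b c (k+N) * x^(k+N) := by
        apply mul_le_mul_of_nonneg_left _ (by positivity)
        linarith
      linarith
    rw [le_div_iff₀ hFpos]
    have hNa : 2*M' ≤ (N:ℝ)/a := by
      rw [le_div_iff₀ ha]
      linarith
    calc M' * hyperFR a b c x ≤ (N:ℝ)/a * (hyperFR a b c x - C) := by nlinarith
      _ ≤ hyperFR (a+1) b c x := hHge
end

section
/- Let a and c be real constants with 0 < a < c. Then lim_{x→+∞} (1+x)^a · F(a+1,a;c;−x) = Γ(c)/(Γ(c−a)Γ(a+1)), where x ranges over the positive reals. -/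
open Complex Filter MeasureTheory Metric Set

open intervalIntegral

lemma auxInt {a : ℝ} (ha : 0 < a) {b₁ b₂ : ℝ} (h₁ : 0 ≤ b₁) (h₂ : 0 ≤ b₂) :
    IntervalIntegrable (fun u : ℝ => u ^ (a-1) * (1+u) ^ (-(a+1))) volume b₁ b₂ := by
  apply (intervalIntegrable_rpow' (by linarith)).mul_continuousOn
  apply ContinuousOn.rpow_const (by fun_prop)
  intro u hu
  have hu0 : 0 ≤ u := le_trans (le_min h₁ h₂) hu.1
  exact Or.inl (by positivity)

lemma auxDeriv {a : ℝ} (ha : 0 < a) {u : ℝ} (hu : 0 < u) :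
    HasDerivAt (fun v : ℝ => (v/(1+v)) ^ a / a) (u ^ (a-1) * (1+u) ^ (-(a+1))) u := by
  have h1u : (0:ℝ) < 1 + u := by linarith
  have hd : HasDerivAt (fun v : ℝ => 1 + v) 1 u := by
    exact (hasDerivAt_id' u).const_add 1
  have hg : HasDerivAt (fun v : ℝ => v/(1+v)) ((1*(1+u) - u*1)/(1+u)^2) u :=
    (hasDerivAt_id u).div hd h1u.ne'
  have hq : (0:ℝ) < u / (1+u) := by positivity
  have hpow : HasDerivAt (fun y : ℝ => y ^ a) (a * (u/(1+u)) ^ (a-1)) (u/(1+u)) :=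
    Real.hasDerivAt_rpow_const (Or.inl hq.ne')
  have := (hpow.comp u hg).div_const a
  refine HasDerivAt.congr_deriv this ?_
  rw [Real.div_rpow hu.le h1u.le]
  have e2 : ((1+u):ℝ) ^ (a+1) = (1+u) ^ (a-1) * (1+u) ^ (2:ℕ) := by
    rw [← Real.rpow_natCast (1+u) 2, ← Real.rpow_add h1u]
    ring_nf
  rw [Real.rpow_neg h1u.le, e2]
  have hne : (1+u) ^ (a-1) ≠ 0 := by positivity
  have hne2 : ((1+u):ℝ) ^ (2:ℕ) ≠ 0 := by positivity
  field_simp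
  ring

lemma auxJ {a : ℝ} (ha : 0 < a) {m : ℝ} (hm : 0 < m) :
    ∫ u in (0:ℝ)..m, u ^ (a-1) * (1+u) ^ (-(a+1)) = (m/(1+m)) ^ a / a := by
  have key : ∀ ε ∈ Ioc (0:ℝ) m,
      |(∫ u in (0:ℝ)..m, u ^ (a-1) * (1+u) ^ (-(a+1))) - (m/(1+m)) ^ a / a| ≤ 2 * (ε ^ a / a) := by
    intro ε hε
    obtain ⟨hε0, hεm⟩ := hε
    have h2 : (∫ u in ε..m, u ^ (a-1) * (1+u) ^ (-(a+1)))
        = (m/(1+m)) ^ a / a - (ε/(1+ε)) ^ a / a := by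
      apply integral_eq_sub_of_hasDerivAt
      · intro u hu
        rw [uIcc_of_le hεm] at hu
        exact auxDeriv ha (lt_of_lt_of_le hε0 hu.1)
      · exact auxInt ha hε0.le hm.le
    have h3 : (∫ u in (0:ℝ)..m, u ^ (a-1) * (1+u) ^ (-(a+1)))
        = (∫ u in (0:ℝ)..ε, u ^ (a-1) * (1+u) ^ (-(a+1)))
          + ∫ u in ε..m, u ^ (a-1) * (1+u) ^ (-(a+1)) :=
      (integral_add_adjacent_intervals (auxInt ha le_rfl hε0.le) (auxInt ha hε0.le hm.le)).symm
    have h4a : 0 ≤ ∫ u in (0:ℝ)..ε, u ^ (a-1) * (1+u) ^ (-(a+1)) := by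
      apply intervalIntegral.integral_nonneg hε0.le
      intro u hu
      have : (0:ℝ) ≤ u := hu.1
      positivity
    have h4b : (∫ u in (0:ℝ)..ε, u ^ (a-1) * (1+u) ^ (-(a+1))) ≤ ε ^ a / a := by
      have hle : (∫ u in (0:ℝ)..ε, u ^ (a-1) * (1+u) ^ (-(a+1))) ≤ ∫ u in (0:ℝ)..ε, u ^ (a-1) := by
        apply intervalIntegral.integral_mono_on hε0.le (auxInt ha le_rfl hε0.le)
          (intervalIntegrable_rpow' (by linarith))
        intro u hu
        have hu0 : (0:ℝ) ≤ u := hu.1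
        have h1 : (1+u) ^ (-(a+1)) ≤ 1 :=
          Real.rpow_le_one_of_one_le_of_nonpos (by linarith) (by linarith)
        calc u ^ (a-1) * (1+u) ^ (-(a+1)) ≤ u ^ (a-1) * 1 := by
              apply mul_le_mul_of_nonneg_left h1 (Real.rpow_nonneg hu0 _)
          _ = u ^ (a-1) := mul_one _
      have heq : (∫ u in (0:ℝ)..ε, u ^ (a-1)) = ε ^ a / a := by
        rw [integral_rpow (Or.inl (by linarith))]
        rw [Real.zero_rpow (by linarith), sub_add_cancel, sub_zero]
      linarith
    have h5a : (0:ℝ) ≤ (ε/(1+ε)) ^ a / a := by positivity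
    have h5b : (ε/(1+ε)) ^ a / a ≤ ε ^ a / a := by
      have hbase : ε/(1+ε) ≤ ε := by
        rw [div_le_iff₀ (by linarith)]
        nlinarith
      gcongr <;> positivity
    rw [h3, h2]
    rw [abs_le]
    constructor <;> [linarith; linarith]
  have hlim : Tendsto (fun ε : ℝ => 2 * (ε ^ a / a)) (nhdsWithin 0 (Ioi 0)) (nhds 0) := by
    have h0 : Tendsto (fun ε : ℝ => ε ^ a) (nhdsWithin 0 (Ioi 0)) (nhds 0) := by
      have hc : ContinuousAt (fun x : ℝ => x ^ a) 0 :=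
        Real.continuousAt_rpow_const 0 a (Or.inr ha.le)
      have h0' : Tendsto (fun ε : ℝ => ε ^ a) (nhdsWithin 0 (Ioi 0)) (nhds ((0:ℝ) ^ a)) :=
        hc.tendsto.mono_left nhdsWithin_le_nhds
      rwa [Real.zero_rpow ha.ne'] at h0'
    have := (h0.div_const a).const_mul 2
    simpa using this
  have habs := ge_of_tendsto hlim
    (eventually_of_mem (Ioc_mem_nhdsGT hm) key)
  have := abs_nonneg ((∫ u in (0:ℝ)..m, u ^ (a-1) * (1+u) ^ (-(a+1))) - (m/(1+m)) ^ a / a)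
  have h0 : |(∫ u in (0:ℝ)..m, u ^ (a-1) * (1+u) ^ (-(a+1))) - (m/(1+m)) ^ a / a| = 0 := le_antisymm habs this
  have := abs_eq_zero.mp h0
  linarith

lemma tendsto_main {a c : ℝ} (ha : 0 < a) (hac : a < c) :
    Tendsto (fun x : ℝ => ∫ u in (0:ℝ)..x, u ^ (a-1) * (1 - u/x) ^ (c-a-1) * (1+u) ^ (-(a+1)))
      atTop (nhds (1/a)) := by
  set β : ℝ := c - a - 1 with hβdef
  have hβ : -1 < β := by rw [hβdef]; linarith
  have hβ1 : (0:ℝ) < β + 1 := by linarith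
  have hbound : ∀ x : ℝ, 2 ≤ x →
      min ((1 - x ^ (-(1/4:ℝ))) ^ β) 1 * ((x ^ (3/4:ℝ) / (1 + x ^ (3/4:ℝ))) ^ a / a)
        ≤ (∫ u in (0:ℝ)..x, u ^ (a-1) * (1 - u/x) ^ β * (1+u) ^ (-(a+1)))
      ∧ (∫ u in (0:ℝ)..x, u ^ (a-1) * (1 - u/x) ^ β * (1+u) ^ (-(a+1)))
        ≤ max ((1 - x ^ (-(1/4:ℝ))) ^ β) 1 * ((x ^ (3/4:ℝ) / (1 + x ^ (3/4:ℝ))) ^ a / a)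
          + x ^ (-(1/2:ℝ)) / (β+1) := by
    intro x hx2
    have hx0 : (0:ℝ) < x := by linarith
    have hx1 : (1:ℝ) < x := by linarith
    set m : ℝ := x ^ (3/4:ℝ) with hmdef
    have hm1 : 1 < m := (Real.one_lt_rpow_iff_of_pos hx0).mpr (Or.inl ⟨hx1, by norm_num⟩)
    have hm0 : (0:ℝ) < m := by linarith
    have hmx : m < x := by
      calc m = x ^ (3/4:ℝ) := hmdef
        _ < x ^ (1:ℝ) := Real.rpow_lt_rpow_of_exponent_lt hx1 (by norm_num)
        _ = x := Real.rpow_one x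
    have hmx' : m / x = x ^ (-(1/4:ℝ)) := by
      rw [show (-(1/4:ℝ)) = 3/4 - 1 by norm_num, Real.rpow_sub hx0, Real.rpow_one, hmdef]
    have hw0 : (0:ℝ) < 1 - m/x := by
      have : m/x < 1 := (div_lt_one hx0).mpr hmx
      linarith
    -- pointwise bounds on [0, m]
    have hptlo : ∀ u ∈ Icc (0:ℝ) m, min ((1-m/x) ^ β) 1 * (u ^ (a-1) * (1+u) ^ (-(a+1)))
        ≤ u ^ (a-1) * (1 - u/x) ^ β * (1+u) ^ (-(a+1)) := by
      intro u hu
      have hu0 : (0:ℝ) ≤ u := hu.1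
      have hb1 : 1 - m/x ≤ 1 - u/x := by
        have : u/x ≤ m/x := by gcongr; exact hu.2
        linarith
      have hb2 : 1 - u/x ≤ 1 := by
        have : 0 ≤ u/x := by positivity
        linarith
      have hb0 : 0 < 1 - u/x := lt_of_lt_of_le hw0 hb1
      have hmin : min ((1-m/x) ^ β) 1 ≤ (1 - u/x) ^ β := by
        rcases le_or_gt 0 β with hβ0 | hβ0
        · exact le_trans (min_le_left _ _) (Real.rpow_le_rpow hw0.le hb1 hβ0)
        · exact le_trans (min_le_right _ _)
            (Real.one_le_rpow_of_pos_of_le_one_of_nonpos hb0 hb2 hβ0.le)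
      calc min ((1-m/x) ^ β) 1 * (u ^ (a-1) * (1+u) ^ (-(a+1)))
          ≤ (1 - u/x) ^ β * (u ^ (a-1) * (1+u) ^ (-(a+1))) :=
            mul_le_mul_of_nonneg_right hmin
              (mul_nonneg (Real.rpow_nonneg hu0 _) (Real.rpow_nonneg (by linarith) _))
        _ = u ^ (a-1) * (1 - u/x) ^ β * (1+u) ^ (-(a+1)) := by ring
    have hpthi : ∀ u ∈ Icc (0:ℝ) m, u ^ (a-1) * (1 - u/x) ^ β * (1+u) ^ (-(a+1))
        ≤ max ((1-m/x) ^ β) 1 * (u ^ (a-1) * (1+u) ^ (-(a+1))) := by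
      intro u hu
      have hu0 : (0:ℝ) ≤ u := hu.1
      have hb1 : 1 - m/x ≤ 1 - u/x := by
        have : u/x ≤ m/x := by gcongr; exact hu.2
        linarith
      have hb2 : 1 - u/x ≤ 1 := by
        have : 0 ≤ u/x := by positivity
        linarith
      have hb0 : 0 < 1 - u/x := lt_of_lt_of_le hw0 hb1
      have hmax : (1 - u/x) ^ β ≤ max ((1-m/x) ^ β) 1 := by
        rcases le_or_gt 0 β with hβ0 | hβ0
        · exact le_trans (Real.rpow_le_one hb0.le hb2 hβ0) (le_max_right _ _)
        · exact le_trans (Real.rpow_le_rpow_of_nonpos hw0 hb1 hβ0.le) (le_max_left _ _)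
      calc u ^ (a-1) * (1 - u/x) ^ β * (1+u) ^ (-(a+1))
          = (1 - u/x) ^ β * (u ^ (a-1) * (1+u) ^ (-(a+1))) := by ring
        _ ≤ max ((1-m/x) ^ β) 1 * (u ^ (a-1) * (1+u) ^ (-(a+1))) :=
            mul_le_mul_of_nonneg_right hmax
              (mul_nonneg (Real.rpow_nonneg hu0 _) (Real.rpow_nonneg (by linarith) _))
    -- integrability on [0, m]
    have hcont1 : ContinuousOn (fun u : ℝ => (1 - u/x) ^ β) (Set.uIcc 0 m) := by
      apply ContinuousOn.rpow_const (by fun_prop)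
      intro u hu
      rw [Set.uIcc_of_le hm0.le] at hu
      have h1 : u/x ≤ m/x := by gcongr; exact hu.2
      exact Or.inl (by nlinarith)
    have hcont2 : ContinuousOn (fun u : ℝ => (1+u) ^ (-(a+1))) (Set.uIcc 0 m) := by
      apply ContinuousOn.rpow_const (by fun_prop)
      intro u hu
      rw [Set.uIcc_of_le hm0.le] at hu
      have := hu.1
      exact Or.inl (by nlinarith)
    have hi1 : IntervalIntegrable
        (fun u : ℝ => u ^ (a-1) * (1 - u/x) ^ β * (1+u) ^ (-(a+1))) volume 0 m :=
      (((intervalIntegrable_rpow' (by linarith)).mul_continuousOn hcont1).mul_continuousOn hcont2)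
    -- integrability on [m, x]
    have hi2' : IntervalIntegrable (fun u : ℝ => (x-u) ^ β) volume m x := by
      have h := (intervalIntegrable_rpow' (r := β) hβ (a := (0:ℝ)) (b := x - m)).comp_sub_left x
      have h2 := h.symm
      simpa using h2
    have hcont3 : ContinuousOn
        (fun u : ℝ => (x ^ β)⁻¹ * (u ^ (a-1) * (1+u) ^ (-(a+1)))) (Set.uIcc m x) := by
      apply ContinuousOn.mul continuousOn_const
      apply ContinuousOn.mul
      · apply ContinuousOn.rpow_const (by fun_prop)
        intro u hu
        rw [Set.uIcc_of_le hmx.le] at hu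
        exact Or.inl (by nlinarith [hu.1])
      · apply ContinuousOn.rpow_const (by fun_prop)
        intro u hu
        rw [Set.uIcc_of_le hmx.le] at hu
        exact Or.inl (by nlinarith [hu.1])
    have hi2'' : IntervalIntegrable
        (fun u : ℝ => (x-u) ^ β * ((x ^ β)⁻¹ * (u ^ (a-1) * (1+u) ^ (-(a+1))))) volume m x :=
      hi2'.mul_continuousOn hcont3
    have hi2 : IntervalIntegrable
        (fun u : ℝ => u ^ (a-1) * (1 - u/x) ^ β * (1+u) ^ (-(a+1))) volume m x := by
      apply hi2''.congr
      have hmem := ae_restrict_mem (μ := volume) (measurableSet_uIoc (a := m) (b := x))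
      intro u hu
      rw [Set.uIoc_of_le hmx.le] at hu
      have e1 : (1:ℝ) - u/x = (x-u)/x := by field_simp
      dsimp only
      rw [e1, Real.div_rpow (by linarith [hu.2]) hx0.le, div_eq_mul_inv]
      ring
    -- I2 bounds
    have hI2nonneg : 0 ≤ ∫ u in m..x, u ^ (a-1) * (1 - u/x) ^ β * (1+u) ^ (-(a+1)) := by
      apply intervalIntegral.integral_nonneg hmx.le
      intro u hu
      have h1 : (0:ℝ) ≤ u := by linarith [hu.1]
      have h2 : 0 ≤ 1 - u/x := by
        have : u/x ≤ 1 := (div_le_one hx0).mpr hu.2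
        linarith
      exact mul_nonneg (mul_nonneg (Real.rpow_nonneg h1 _) (Real.rpow_nonneg h2 _))
        (Real.rpow_nonneg (by linarith) _)
    have hI2le : (∫ u in m..x, u ^ (a-1) * (1 - u/x) ^ β * (1+u) ^ (-(a+1)))
        ≤ x ^ (-(1/2:ℝ)) / (β+1) := by
      have hstep1 : (∫ u in m..x, u ^ (a-1) * (1 - u/x) ^ β * (1+u) ^ (-(a+1)))
          ≤ ∫ u in m..x, (x ^ (-(3/2:ℝ)) * (x ^ β)⁻¹) * (x-u) ^ β := by
        apply intervalIntegral.integral_mono_on hmx.le hi2 (hi2'.const_mul _)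
        intro u hu
        have hu0 : (0:ℝ) < u := lt_of_lt_of_le (by linarith) hu.1
        have e1 : (1:ℝ) - u/x = (x-u)/x := by field_simp
        have hxu : (0:ℝ) ≤ x - u := by linarith [hu.2]
        have s1 : (1+u) ^ (-(a+1)) ≤ u ^ (-(a+1)) :=
          Real.rpow_le_rpow_of_nonpos hu0 (by linarith) (by linarith)
        have s2 : u ^ (a-1) * u ^ (-(a+1)) = u ^ (-(2:ℝ)) := by
          rw [← Real.rpow_add hu0, show a - 1 + -(a+1) = (-(2:ℝ)) by ring]
        have s3 : u ^ (-(2:ℝ)) ≤ m ^ (-(2:ℝ)) :=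
          Real.rpow_le_rpow_of_nonpos hm0 hu.1 (by norm_num)
        have s4 : m ^ (-(2:ℝ)) = x ^ (-(3/2:ℝ)) := by
          rw [hmdef, ← Real.rpow_mul hx0.le]
          norm_num
        have s5 : u ^ (a-1) * (1+u) ^ (-(a+1)) ≤ x ^ (-(3/2:ℝ)) := by
          calc u ^ (a-1) * (1+u) ^ (-(a+1)) ≤ u ^ (a-1) * u ^ (-(a+1)) :=
                mul_le_mul_of_nonneg_left s1 (Real.rpow_nonneg hu0.le _)
            _ = u ^ (-(2:ℝ)) := s2
            _ ≤ m ^ (-(2:ℝ)) := s3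
            _ = x ^ (-(3/2:ℝ)) := s4
        calc u ^ (a-1) * (1 - u/x) ^ β * (1+u) ^ (-(a+1))
            = ((x-u) ^ β * (x ^ β)⁻¹) * (u ^ (a-1) * (1+u) ^ (-(a+1))) := by
              rw [e1, Real.div_rpow hxu hx0.le, div_eq_mul_inv]; ring
          _ ≤ ((x-u) ^ β * (x ^ β)⁻¹) * x ^ (-(3/2:ℝ)) := by
              apply mul_le_mul_of_nonneg_left s5
              exact mul_nonneg (Real.rpow_nonneg hxu _)
                (inv_nonneg.mpr (Real.rpow_nonneg hx0.le _))
          _ = (x ^ (-(3/2:ℝ)) * (x ^ β)⁻¹) * (x-u) ^ β := by ring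
      have hstep2 : (∫ u in m..x, (x ^ (-(3/2:ℝ)) * (x ^ β)⁻¹) * (x-u) ^ β)
          = (x ^ (-(3/2:ℝ)) * (x ^ β)⁻¹) * ((x-m) ^ (β+1) / (β+1)) := by
        rw [intervalIntegral.integral_const_mul]
        congr 1
        have hcs := intervalIntegral.integral_comp_sub_left (a := m) (b := x)
          (fun v : ℝ => v ^ β) x
        rw [hcs]
        simp only [sub_self, sub_sub_cancel]
        rw [integral_rpow (Or.inl hβ), Real.zero_rpow (by linarith), sub_zero]
      have hstep3 : (x ^ (-(3/2:ℝ)) * (x ^ β)⁻¹) * ((x-m) ^ (β+1) / (β+1))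
          ≤ x ^ (-(1/2:ℝ)) / (β+1) := by
        have t1 : (x-m) ^ (β+1) ≤ x ^ (β+1) :=
          Real.rpow_le_rpow (by linarith) (by linarith) (by linarith)
        have hA : 0 ≤ x ^ (-(3/2:ℝ)) * (x ^ β)⁻¹ :=
          mul_nonneg (Real.rpow_nonneg hx0.le _) (inv_nonneg.mpr (Real.rpow_nonneg hx0.le _))
        have t2 : x ^ (-(3/2:ℝ)) * (x ^ β)⁻¹ * x ^ (β+1) = x ^ (-(1/2:ℝ)) := by
          rw [← Real.rpow_neg hx0.le β, ← Real.rpow_add hx0, ← Real.rpow_add hx0]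
          congr 1
          ring
        calc (x ^ (-(3/2:ℝ)) * (x ^ β)⁻¹) * ((x-m) ^ (β+1) / (β+1))
            ≤ (x ^ (-(3/2:ℝ)) * (x ^ β)⁻¹) * (x ^ (β+1) / (β+1)) := by
              apply mul_le_mul_of_nonneg_left _ hA
              gcongr
          _ = x ^ (-(1/2:ℝ)) / (β+1) := by
              rw [← mul_div_assoc, t2]
      calc (∫ u in m..x, u ^ (a-1) * (1 - u/x) ^ β * (1+u) ^ (-(a+1)))
          ≤ ∫ u in m..x, (x ^ (-(3/2:ℝ)) * (x ^ β)⁻¹) * (x-u) ^ β := hstep1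
        _ = (x ^ (-(3/2:ℝ)) * (x ^ β)⁻¹) * ((x-m) ^ (β+1) / (β+1)) := hstep2
        _ ≤ x ^ (-(1/2:ℝ)) / (β+1) := hstep3
    -- I1 bounds
    have hI1lo : min ((1-m/x) ^ β) 1 * ((m/(1+m)) ^ a / a)
        ≤ ∫ u in (0:ℝ)..m, u ^ (a-1) * (1 - u/x) ^ β * (1+u) ^ (-(a+1)) := by
      have h := intervalIntegral.integral_mono_on hm0.le
        ((auxInt ha le_rfl hm0.le).const_mul _) hi1 hptlo
      rwa [intervalIntegral.integral_const_mul, auxJ ha hm0] at h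
    have hI1hi : (∫ u in (0:ℝ)..m, u ^ (a-1) * (1 - u/x) ^ β * (1+u) ^ (-(a+1)))
        ≤ max ((1-m/x) ^ β) 1 * ((m/(1+m)) ^ a / a) := by
      have h := intervalIntegral.integral_mono_on hm0.le hi1
        ((auxInt ha le_rfl hm0.le).const_mul _) hpthi
      rwa [intervalIntegral.integral_const_mul, auxJ ha hm0] at h
    have hsplit := intervalIntegral.integral_add_adjacent_intervals hi1 hi2
    constructor
    · rw [← hmx']
      calc min ((1-m/x) ^ β) 1 * ((m/(1+m)) ^ a / a)
          ≤ ∫ u in (0:ℝ)..m, u ^ (a-1) * (1 - u/x) ^ β * (1+u) ^ (-(a+1)) := hI1lo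
        _ ≤ (∫ u in (0:ℝ)..m, u ^ (a-1) * (1 - u/x) ^ β * (1+u) ^ (-(a+1)))
            + ∫ u in m..x, u ^ (a-1) * (1 - u/x) ^ β * (1+u) ^ (-(a+1)) :=
              le_add_of_nonneg_right hI2nonneg
        _ = ∫ u in (0:ℝ)..x, u ^ (a-1) * (1 - u/x) ^ β * (1+u) ^ (-(a+1)) := hsplit
    · rw [← hmx']
      calc (∫ u in (0:ℝ)..x, u ^ (a-1) * (1 - u/x) ^ β * (1+u) ^ (-(a+1)))
          = (∫ u in (0:ℝ)..m, u ^ (a-1) * (1 - u/x) ^ β * (1+u) ^ (-(a+1)))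
            + ∫ u in m..x, u ^ (a-1) * (1 - u/x) ^ β * (1+u) ^ (-(a+1)) := hsplit.symm
        _ ≤ max ((1-m/x) ^ β) 1 * ((m/(1+m)) ^ a / a) + x ^ (-(1/2:ℝ)) / (β+1) :=
              add_le_add hI1hi hI2le
  -- limits of the bounding functions
  have h₁min : Tendsto (fun x : ℝ => (1 - x ^ (-(1/4:ℝ))) ^ β) atTop (nhds 1) := by
    have hb : Tendsto (fun x : ℝ => 1 - x ^ (-(1/4:ℝ))) atTop (nhds 1) := by
      have h := (tendsto_rpow_neg_atTop (y := (1/4:ℝ)) (by norm_num)).const_sub 1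
      simpa using h
    have hc : ContinuousAt (fun t : ℝ => t ^ β) 1 :=
      Real.continuousAt_rpow_const 1 β (Or.inl one_ne_zero)
    have h := hc.tendsto.comp hb
    simpa [Real.one_rpow, Function.comp_def] using h
  have h₂ : Tendsto (fun x : ℝ => x ^ (3/4:ℝ) / (1 + x ^ (3/4:ℝ))) atTop (nhds 1) := by
    have hq : Tendsto (fun t : ℝ => t / (1+t)) atTop (nhds 1) := by
      have h' : Tendsto (fun t : ℝ => 1 - (1+t)⁻¹) atTop (nhds (1 - 0)) :=
        tendsto_const_nhds.sub (tendsto_inv_atTop_zero.comp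
          (tendsto_atTop_add_const_left _ 1 tendsto_id))
      rw [sub_zero] at h'
      apply h'.congr'
      filter_upwards [eventually_gt_atTop (0:ℝ)] with t ht
      field_simp
      ring
    exact hq.comp (tendsto_rpow_atTop (by norm_num))
  have h₃ : Tendsto (fun x : ℝ => (x ^ (3/4:ℝ) / (1 + x ^ (3/4:ℝ))) ^ a) atTop (nhds 1) := by
    have hc : ContinuousAt (fun t : ℝ => t ^ a) 1 :=
      Real.continuousAt_rpow_const 1 a (Or.inl one_ne_zero)
    have h := hc.tendsto.comp h₂
    simpa [Real.one_rpow, Function.comp_def] using h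
  have hz : Tendsto (fun x : ℝ => x ^ (-(1/2:ℝ)) / (β+1)) atTop (nhds 0) := by
    have h := (tendsto_rpow_neg_atTop (y := (1/2:ℝ)) (by norm_num)).div_const (β+1)
    simpa using h
  have hlo : Tendsto (fun x : ℝ =>
      min ((1 - x ^ (-(1/4:ℝ))) ^ β) 1 * ((x ^ (3/4:ℝ) / (1 + x ^ (3/4:ℝ))) ^ a / a))
      atTop (nhds (1/a)) := by
    have hconst : Tendsto (fun _ : ℝ => (1:ℝ)) atTop (nhds 1) := tendsto_const_nhds
    have h := (h₁min.min hconst).mul (h₃.div_const a)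
    simpa using h
  have hhi : Tendsto (fun x : ℝ =>
      max ((1 - x ^ (-(1/4:ℝ))) ^ β) 1 * ((x ^ (3/4:ℝ) / (1 + x ^ (3/4:ℝ))) ^ a / a)
        + x ^ (-(1/2:ℝ)) / (β+1)) atTop (nhds (1/a)) := by
    have hconst : Tendsto (fun _ : ℝ => (1:ℝ)) atTop (nhds 1) := tendsto_const_nhds
    have h := ((h₁min.max hconst).mul (h₃.div_const a)).add hz
    simpa using h
  exact tendsto_of_tendsto_of_tendsto_of_le_of_le' hlo hhi
    (eventually_atTop.2 ⟨2, fun x hx => (hbound x hx).1⟩)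
    (eventually_atTop.2 ⟨2, fun x hx => (hbound x hx).2⟩)

theorem stmt_17 (a c : ℝ) (ha : 0 < a) (hac : a < c) :
    Tendsto (fun x : ℝ => (1 + x) ^ a * hyperFE (a + 1) a c (-x))
      atTop (nhds (Real.Gamma c / (Real.Gamma (c - a) * Real.Gamma (a + 1)))) := by
  have hΓ := Real.Gamma_add_one ha.ne'
  set C : ℝ := Real.Gamma c / (Real.Gamma a * Real.Gamma (c - a)) with hCdef
  have h1 : Tendsto (fun x : ℝ => (1+x) ^ a * x ^ (-a)) atTop (nhds 1) := by
    have hb : Tendsto (fun x : ℝ => (1+x) / x) atTop (nhds 1) := by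
      have h' : Tendsto (fun x : ℝ => x⁻¹ + 1) atTop (nhds (0 + 1)) :=
        tendsto_inv_atTop_zero.add tendsto_const_nhds
      rw [zero_add] at h'
      apply h'.congr'
      filter_upwards [eventually_gt_atTop (0:ℝ)] with x hx
      field_simp
    have hc : ContinuousAt (fun t : ℝ => t ^ a) 1 :=
      Real.continuousAt_rpow_const 1 a (Or.inl one_ne_zero)
    have h := hc.tendsto.comp hb
    rw [Real.one_rpow] at h
    apply h.congr'
    filter_upwards [eventually_gt_atTop (0:ℝ)] with x hx
    show ((1+x)/x) ^ a = (1+x) ^ a * x ^ (-a)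
    rw [Real.div_rpow (by linarith) hx.le, Real.rpow_neg hx.le, div_eq_mul_inv]
  have hmain := tendsto_main ha hac
  have hprod : Tendsto (fun x : ℝ => C * ((1+x) ^ a * x ^ (-a) *
      (∫ u in (0:ℝ)..x, u ^ (a-1) * (1 - u/x) ^ (c-a-1) * (1+u) ^ (-(a+1)))))
      atTop (nhds (C * (1 * (1/a)))) :=
    tendsto_const_nhds.mul (h1.mul hmain)
  have hval : C * (1 * (1/a)) = Real.Gamma c / (Real.Gamma (c-a) * Real.Gamma (a+1)) := by
    rw [hΓ, hCdef]
    have hΓa : Real.Gamma a ≠ 0 := (Real.Gamma_pos_of_pos ha).ne'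
    have hΓca : Real.Gamma (c-a) ≠ 0 := (Real.Gamma_pos_of_pos (by linarith)).ne'
    field_simp
  rw [← hval]
  apply hprod.congr'
  filter_upwards [eventually_gt_atTop (0:ℝ)] with x hx0
  have h2 := intervalIntegral.integral_comp_mul_right (a := (0:ℝ)) (b := (1:ℝ))
    (fun u : ℝ => (u/x) ^ (a-1) * (1-u/x) ^ (c-a-1) * (1+u) ^ (-(a+1))) hx0.ne'
  simp only [zero_mul, one_mul, smul_eq_mul] at h2
  have h3 : (∫ t in (0:ℝ)..1, t ^ (a-1) * (1-t) ^ (c-a-1) * (1 - t * (-x)) ^ (-(a+1)))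
      = x⁻¹ * ∫ u in (0:ℝ)..x, (u/x) ^ (a-1) * (1-u/x) ^ (c-a-1) * (1+u) ^ (-(a+1)) := by
    rw [← h2]
    apply intervalIntegral.integral_congr
    intro t _
    dsimp only
    rw [mul_neg, sub_neg_eq_add, mul_div_cancel_right₀ _ hx0.ne']
  have h4 : (∫ u in (0:ℝ)..x, (u/x) ^ (a-1) * (1-u/x) ^ (c-a-1) * (1+u) ^ (-(a+1)))
      = x ^ (-(a-1)) * ∫ u in (0:ℝ)..x, u ^ (a-1) * (1-u/x) ^ (c-a-1) * (1+u) ^ (-(a+1)) := by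
    rw [← intervalIntegral.integral_const_mul]
    apply intervalIntegral.integral_congr
    intro u hu
    rw [Set.uIcc_of_le hx0.le] at hu
    dsimp only
    rw [Real.div_rpow hu.1 hx0.le, Real.rpow_neg hx0.le, div_eq_mul_inv]
    ring
  have h5 : x⁻¹ * x ^ (-(a-1)) = x ^ (-a) := by
    rw [← Real.rpow_neg_one x, ← Real.rpow_add hx0, show (-1:ℝ) + -(a-1) = -a by ring]
  show C * _ = _
  rw [hyperFE, h3, h4, ← hCdef, ← h5]
  ring
end
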